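/- arXiv:2207.04486 — 5 statements merged into one kernel-verified Lean document; each statement's English description precedes it below -/
import Mathlib

section
/- For every bounded continuous section f of π, every y ∈ Y and every t > 0, the left derivative of s ↦ iQ_s f(y) at t exists and equals −(iD⁻f(y, t))²/(2t²), i.e. lim_{s → t⁻} (iQ_s f(y) − iQ_t f(y))/(s − t) = −(iD⁻f(y, t))²/(2t²). -/
open Metric Set Filter Topology MeasureTheory

/-- `F(t,y,z) = max_j f_j(z) + d(f(z), π⁻¹(y))² / (2t)`. -/
noncomputable def hlF {κ : ℕ} (Y : Set (EuclideanSpace ℝ (Fin κ)))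
    (π : EuclideanSpace ℝ (Fin κ) → Y) (f : Y → EuclideanSpace ℝ (Fin κ))
    (t : ℝ) (y z : Y) : ℝ :=
  (⨆ j, f z j) + (Metric.infDist (f z) (π ⁻¹' {y}))^2 / (2*t)

/-- The intrinsic Hopf–Lax semigroup `iQ_t f(y) = inf_{z ∈ Y} F(t,y,z)`. -/
noncomputable def iQ {κ : ℕ} (Y : Set (EuclideanSpace ℝ (Fin κ)))
    (π : EuclideanSpace ℝ (Fin κ) → Y) (f : Y → EuclideanSpace ℝ (Fin κ))
    (t : ℝ) (y : Y) : ℝ :=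
  ⨅ z : Y, hlF Y π f t y z

/-- A minimizing sequence for `iQ_t f(y)`. -/
def IsMinSeq {κ : ℕ} (Y : Set (EuclideanSpace ℝ (Fin κ)))
    (π : EuclideanSpace ℝ (Fin κ) → Y) (f : Y → EuclideanSpace ℝ (Fin κ))
    (t : ℝ) (y : Y) (u : ℕ → Y) : Prop :=
  Filter.Tendsto (fun n => hlF Y π f t y (u n)) Filter.atTop (nhds (iQ Y π f t y))

/-- `iD⁺f(y,t)`. -/
noncomputable def iDp {κ : ℕ} (Y : Set (EuclideanSpace ℝ (Fin κ)))
    (π : EuclideanSpace ℝ (Fin κ) → Y) (f : Y → EuclideanSpace ℝ (Fin κ))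
    (y : Y) (t : ℝ) : ℝ :=
  sSup { a : ℝ | ∃ u : ℕ → Y, IsMinSeq Y π f t y u ∧
    a = Filter.limsup (fun n => Metric.infDist (f (u n)) (π ⁻¹' {y})) Filter.atTop }

/-- `iD⁻f(y,t)`. -/
noncomputable def iDm {κ : ℕ} (Y : Set (EuclideanSpace ℝ (Fin κ)))
    (π : EuclideanSpace ℝ (Fin κ) → Y) (f : Y → EuclideanSpace ℝ (Fin κ))
    (y : Y) (t : ℝ) : ℝ :=
  sInf { a : ℝ | ∃ u : ℕ → Y, IsMinSeq Y π f t y u ∧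
    a = Filter.liminf (fun n => Metric.infDist (f (u n)) (π ⁻¹' {y})) Filter.atTop }

/-- Elementary identity relating `hlF` at two times. -/
lemma hlF_time_identity {κ : ℕ} (Y : Set (EuclideanSpace ℝ (Fin κ)))
    (π : EuclideanSpace ℝ (Fin κ) → Y) (f : Y → EuclideanSpace ℝ (Fin κ))
    {s t : ℝ} (hs : s ≠ 0) (ht : t ≠ 0) (y z : Y) :
    hlF Y π f s y z
      = hlF Y π f t y z
        + (Metric.infDist (f z) (π ⁻¹' {y}))^2 * ((t - s)/(2*s*t)) := by
  unfold hlF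
  field_simp
  ring


private lemma expand_aux1 {t : ℝ} (ht : t ≠ 0) (a s : ℝ) :
    (-a/(2*t^2) + (t - s)) * (s - t) = a * ((t - s)/(2*t^2)) - (t - s)^2 := by
  field_simp
  ring

private lemma expand_aux2 {s t : ℝ} (hs : s ≠ 0) (ht : t ≠ 0) (a : ℝ) :
    -a/(2*s*t) * (s - t) = a * ((t - s)/(2*s*t)) := by
  field_simp
  ring

private lemma expand_aux3 {t : ℝ} (ht : t ≠ 0) (a e : ℝ) :
    (-a + e*t^2/2)/(2*t^2) = -a/(2*t^2) + e/4 := by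
  field_simp
  ring

private lemma expand_aux4 {m : ℝ} (hm : m + 1 ≠ 0) (e t : ℝ) :
    2*(m+1)*(e * t^2 / (4*(m+1))) = e * t^2 / 2 := by
  field_simp
  ring

set_option maxHeartbeats 1000000 in
theorem stmt_11 (κ : ℕ) (hκ : 1 ≤ κ)
    (Y : Set (EuclideanSpace ℝ (Fin κ))) (hY : Y.Nonempty) (hYb : Bornology.IsBounded Y)
    (π : EuclideanSpace ℝ (Fin κ) → Y) (hπc : Continuous π) (hπo : IsOpenMap π)
    (hπs : Function.Surjective π)
    (f : Y → EuclideanSpace ℝ (Fin κ)) (hfc : Continuous f)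
    (hfb : Bornology.IsBounded (Set.range f)) (hsec : ∀ y : Y, π (f y) = y)

    (y : Y) (t : ℝ) (ht : 0 < t) :
    HasDerivWithinAt (fun s => iQ Y π f s y)
      (-(iDm Y π f y t)^2 / (2*t^2)) (Set.Iio t) t := by
  classical
  haveI : Nonempty Y := hY.to_subtype
  haveI : Nonempty (Fin κ) := ⟨⟨0, hκ⟩⟩
  set S : Set (EuclideanSpace ℝ (Fin κ)) := π ⁻¹' {y} with hSdef
  have hfyS : f y ∈ S := by simp [hSdef, hsec y]
  -- bound on f
  obtain ⟨C0, hC0⟩ := isBounded_iff_forall_norm_le.mp hfb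
  set C : ℝ := max C0 0 with hCdef
  have hC : ∀ z : Y, ‖f z‖ ≤ C := fun z =>
    le_trans (hC0 _ (Set.mem_range_self z)) (le_max_left _ _)
  have hC0' : (0:ℝ) ≤ C := le_max_right _ _
  have hcoord : ∀ (x : EuclideanSpace ℝ (Fin κ)) (j : Fin κ), |x j| ≤ ‖x‖ := by
    intro x j
    have h : ‖x j‖^2 ≤ ∑ i, ‖x i‖^2 :=
      Finset.single_le_sum (f := fun i => ‖x i‖^2) (fun i _ => sq_nonneg _) (Finset.mem_univ j)
    calc |x j| = Real.sqrt (‖x j‖^2) := by rw [Real.sqrt_sq (norm_nonneg _)]; simp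
      _ ≤ Real.sqrt (∑ i, ‖x i‖^2) := Real.sqrt_le_sqrt h
      _ = ‖x‖ := (EuclideanSpace.norm_eq x).symm
  -- bounds on the sup term
  have hg_le : ∀ z : Y, (⨆ j, f z j) ≤ C := fun z =>
    ciSup_le (fun j => le_trans (le_abs_self _) (le_trans (hcoord _ j) (hC z)))
  have hg_ge : ∀ z : Y, -C ≤ (⨆ j, f z j) := by
    intro z
    have h1 : -C ≤ f z (Classical.arbitrary (Fin κ)) := by
      have := hcoord (f z) (Classical.arbitrary (Fin κ))
      have := hC z
      have := neg_abs_le (f z (Classical.arbitrary (Fin κ)))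
      linarith
    exact le_trans h1 (le_ciSup (Set.Finite.bddAbove (Set.finite_range _)) _)
  -- bounds on the distance term
  set M : ℝ := 2*C with hMdef
  have hM0 : (0:ℝ) ≤ M := by positivity
  have hD0 : ∀ z : Y, 0 ≤ Metric.infDist (f z) S := fun z => Metric.infDist_nonneg
  have hDM : ∀ z : Y, Metric.infDist (f z) S ≤ M := by
    intro z
    have h1 : Metric.infDist (f z) S ≤ dist (f z) (f y) := Metric.infDist_le_dist_of_mem hfyS
    have h2 : dist (f z) (f y) ≤ ‖f z‖ + ‖f y‖ := dist_le_norm_add_norm _ _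
    have := hC z; have := hC y
    simp only [hMdef]; linarith
  -- lower bound for hlF and BddBelow
  have hF_ge : ∀ r : ℝ, 0 < r → ∀ z : Y, -C ≤ hlF Y π f r y z := by
    intro r hr z
    have h1 := hg_ge z
    have h2 : 0 ≤ (Metric.infDist (f z) S)^2 / (2*r) := by positivity
    unfold hlF
    rw [← hSdef]
    linarith
  have hbdd : ∀ r : ℝ, 0 < r → BddBelow (Set.range fun z : Y => hlF Y π f r y z) := by
    intro r hr
    exact ⟨-C, by rintro _ ⟨z, rfl⟩; exact hF_ge r hr z⟩
  have hiQ_le : ∀ r : ℝ, 0 < r → ∀ z : Y, iQ Y π f r y ≤ hlF Y π f r y z := by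
    intro r hr z
    exact ciInf_le (hbdd r hr) z
  -- Lipschitz-type bounds between times
  have hmono : ∀ s : ℝ, 0 < s → s < t → iQ Y π f t y ≤ iQ Y π f s y := by
    intro s hs hst
    refine le_ciInf (fun z => ?_)
    have hid := hlF_time_identity Y π f (ne_of_gt hs) (ne_of_gt ht) y z
    have h1 : 0 ≤ (Metric.infDist (f z) (π ⁻¹' {y}))^2 * ((t - s)/(2*s*t)) := by
      have h0 : 0 ≤ (t-s)/(2*s*t) := le_of_lt (div_pos (by linarith) (by positivity))
      positivity
    calc iQ Y π f t y ≤ hlF Y π f t y z := hiQ_le t ht z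
      _ ≤ hlF Y π f s y z := by rw [hid]; linarith
  have hlip : ∀ s : ℝ, 0 < s → s < t →
      iQ Y π f s y ≤ iQ Y π f t y + M^2 * ((t - s)/(2*s*t)) := by
    intro s hs hst
    have key : ∀ z : Y, iQ Y π f s y - M^2 * ((t - s)/(2*s*t)) ≤ hlF Y π f t y z := by
      intro z
      have hid := hlF_time_identity Y π f (ne_of_gt hs) (ne_of_gt ht) y z
      have h1 : (Metric.infDist (f z) (π ⁻¹' {y}))^2 * ((t - s)/(2*s*t))
          ≤ M^2 * ((t - s)/(2*s*t)) := by
        have hc : 0 ≤ (t-s)/(2*s*t) := le_of_lt (div_pos (by linarith) (by positivity))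
        have hD := hDM z
        have hD0' := hD0 z
        have : (Metric.infDist (f z) (π ⁻¹' {y}))^2 ≤ M^2 := by
          rw [← hSdef] at *
          nlinarith
        nlinarith
      have h2 : iQ Y π f s y ≤ hlF Y π f s y z := hiQ_le s hs z
      rw [hid] at h2
      linarith
    have h2 : iQ Y π f s y - M^2 * ((t - s)/(2*s*t)) ≤ iQ Y π f t y := le_ciInf key
    linarith
  -- set A and its properties
  set A : Set ℝ := { a : ℝ | ∃ u : ℕ → Y, IsMinSeq Y π f t y u ∧
    a = Filter.liminf (fun n => Metric.infDist (f (u n)) (π ⁻¹' {y})) Filter.atTop } with hAdef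
  have hiDmA : iDm Y π f y t = sInf A := rfl
  -- A is nonempty: existence of a minimizing sequence
  have hAne : A.Nonempty := by
    have hne : (Set.range fun z : Y => hlF Y π f t y z).Nonempty := Set.range_nonempty _
    obtain ⟨v, -, hv2, hv3⟩ := exists_seq_tendsto_sInf hne (hbdd t ht)
    choose u hu using fun n => hv3 n
    refine ⟨_, u, ?_, rfl⟩
    unfold IsMinSeq iQ
    rw [← sInf_range]
    convert hv2 using 2 with n
    exact (hu n)
  have hAbound : ∀ a ∈ A, 0 ≤ a ∧ a ≤ M := by
    rintro a ⟨u, hu, rfl⟩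
    constructor
    · refine Filter.le_liminf_of_le ?_ (Filter.Eventually.of_forall fun n => Metric.infDist_nonneg)
      exact Filter.isCoboundedUnder_ge_of_le Filter.atTop (fun n => by rw [← hSdef]; exact hDM (u n))
    · refine Filter.liminf_le_of_frequently_le
        (Filter.Frequently.of_forall fun n => by rw [← hSdef]; exact hDM (u n)) ?_
      exact Filter.isBoundedUnder_of ⟨0, fun n => Metric.infDist_nonneg⟩
  have hbddA : BddBelow A := ⟨0, fun a ha => (hAbound a ha).1⟩
  have hiDm0 : 0 ≤ iDm Y π f y t := by
    rw [hiDmA]; exact le_csInf hAne fun a ha => (hAbound a ha).1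
  have hiDmM : iDm Y π f y t ≤ M := by
    obtain ⟨a, ha⟩ := hAne
    rw [hiDmA]
    exact le_trans (csInf_le hbddA ha) (hAbound a ha).2
  set dm : ℝ := iDm Y π f y t with hdm
  -- Step 1: the one-sided inequality
  have step1 : ∀ s : ℝ, 0 < s → s < t →
      iQ Y π f s y - iQ Y π f t y ≤ dm^2 * ((t - s)/(2*s*t)) := by
    intro s hs hst
    set c : ℝ := (t - s)/(2*s*t) with hc
    have hc0 : 0 < c := by rw [hc]; exact div_pos (by linarith) (by positivity)
    have key : ∀ ε : ℝ, 0 < ε →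
        iQ Y π f s y - iQ Y π f t y ≤ (dm + ε)^2 * c + ε := by
      intro ε hε
      obtain ⟨a, haA, halt⟩ := exists_lt_of_csInf_lt hAne
        (show sInf A < sInf A + ε from lt_add_of_pos_right _ hε)
      rw [← hiDmA] at halt
      obtain ⟨u, hu, rfl⟩ := haA
      have hcobdd : Filter.IsCoboundedUnder (· ≥ ·)
          Filter.atTop (fun n => Metric.infDist (f (u n)) (π ⁻¹' {y})) :=
        Filter.isCoboundedUnder_ge_of_le Filter.atTop
          (fun n => by rw [← hSdef]; exact hDM (u n))
      have hfreq : ∃ᶠ n in Filter.atTop,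
          Metric.infDist (f (u n)) (π ⁻¹' {y}) < dm + ε :=
        Filter.frequently_lt_of_liminf_lt hcobdd halt
      have hev : ∀ᶠ n in Filter.atTop, hlF Y π f t y (u n) < iQ Y π f t y + ε :=
        hu.eventually_lt_const (lt_add_of_pos_right _ hε)
      obtain ⟨n, hn1, hn2⟩ := (hfreq.and_eventually hev).exists
      have h1 : iQ Y π f s y ≤ hlF Y π f s y (u n) := hiQ_le s hs (u n)
      rw [hlF_time_identity Y π f (ne_of_gt hs) (ne_of_gt ht) y (u n)] at h1
      have hDn0 : 0 ≤ Metric.infDist (f (u n)) (π ⁻¹' {y}) := Metric.infDist_nonneg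
      have hdmε : 0 < dm + ε := by linarith
      have h2 : (Metric.infDist (f (u n)) (π ⁻¹' {y}))^2 * c ≤ (dm + ε)^2 * c := by
        have hsq2 : (Metric.infDist (f (u n)) (π ⁻¹' {y}))^2 ≤ (dm + ε)^2 := by nlinarith
        exact mul_le_mul_of_nonneg_right hsq2 hc0.le
      linarith
    have tlim : Filter.Tendsto (fun ε : ℝ => (dm + ε)^2 * c + ε)
        (𝓝[>] (0:ℝ)) (𝓝 (dm^2 * c)) := by
      have hcont : ContinuousAt (fun ε : ℝ => (dm + ε)^2 * c + ε) 0 := by fun_prop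
      have h2 : ContinuousWithinAt (fun ε : ℝ => (dm + ε)^2 * c + ε) (Set.Ioi 0) 0 :=
        hcont.continuousWithinAt
      have h3 : Filter.Tendsto (fun ε : ℝ => (dm + ε)^2 * c + ε) (𝓝[>] (0:ℝ))
          (𝓝 ((dm + 0)^2 * c + 0)) := h2
      simpa using h3
    refine ge_of_tendsto tlim ?_
    filter_upwards [self_mem_nhdsWithin] with ε hε
    exact key ε hε
  -- reduce to sequences
  rw [hasDerivWithinAt_iff_tendsto_slope, Set.diff_singleton_eq_self (by simp)]
  rw [Filter.tendsto_iff_seq_tendsto]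
  intro sq hsq
  set L : ℝ := -dm^2 / (2*t^2) with hL
  have hsqt : Filter.Tendsto sq Filter.atTop (𝓝 t) := hsq.mono_right nhdsWithin_le_nhds
  have hsqlt : ∀ᶠ k in Filter.atTop, sq k < t := by
    have := hsq.eventually (eventually_mem_nhdsWithin (s := Set.Iio t) (a := t))
    filter_upwards [this] with k hk; exact hk
  have hsqpos : ∀ᶠ k in Filter.atTop, t/2 < sq k :=
    hsqt.eventually_const_lt (by linarith)
  have hgood : ∀ᶠ k in Filter.atTop, 0 < sq k ∧ sq k < t := by
    filter_upwards [hsqlt, hsqpos] with k h1 h2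
    exact ⟨by linarith, h1⟩
  -- choose near minimizers at times sq k
  have hz : ∀ k, ∃ w : Y, (0 < sq k ∧ sq k < t) →
      hlF Y π f (sq k) y w < iQ Y π f (sq k) y + (t - sq k)^2 := by
    intro k
    by_cases h : 0 < sq k ∧ sq k < t
    · have hpos : iQ Y π f (sq k) y < iQ Y π f (sq k) y + (t - sq k)^2 := by
        have : 0 < (t - sq k)^2 := pow_pos (sub_pos.mpr h.2) 2
        linarith
      obtain ⟨w, hw⟩ := exists_lt_of_ciInf_lt hpos
      exact ⟨w, fun _ => hw⟩
    · exact ⟨Classical.arbitrary Y, fun hh => absurd hh h⟩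
  choose z hzP using hz
  set D : ℕ → ℝ := fun k => Metric.infDist (f (z k)) (π ⁻¹' {y}) with hDdef
  have hDb : ∀ k, 0 ≤ D k ∧ D k ≤ M := fun k =>
    ⟨Metric.infDist_nonneg, by rw [hDdef, ← hSdef]; exact hDM (z k)⟩
  -- key inequality at good k
  have hkey : ∀ k, 0 < sq k → sq k < t →
      iQ Y π f t y ≤ hlF Y π f t y (z k) ∧
      hlF Y π f t y (z k) < iQ Y π f (sq k) y + (t - sq k)^2
        - (D k)^2 * ((t - sq k)/(2*(sq k)*t)) := by
    intro k h1 h2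
    refine ⟨hiQ_le t ht (z k), ?_⟩
    have hw := hzP k ⟨h1, h2⟩
    rw [hlF_time_identity Y π f (ne_of_gt h1) (ne_of_gt ht) y (z k)] at hw
    rw [hDdef]
    linarith
  -- z is a minimizing sequence for time t
  have hupperlim : Filter.Tendsto
      (fun k => iQ Y π f t y + M^2 * ((t - sq k)/(2*(sq k)*t)) + (t - sq k)^2)
      Filter.atTop (𝓝 (iQ Y π f t y)) := by
    have hcont : ContinuousAt
        (fun x : ℝ => iQ Y π f t y + M^2 * ((t - x)/(2*x*t)) + (t - x)^2) t := by
      apply ContinuousAt.add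
      · apply ContinuousAt.add continuousAt_const
        apply ContinuousAt.mul continuousAt_const
        apply ContinuousAt.div (by fun_prop) (by fun_prop)
        positivity
      · fun_prop
    have := hcont.tendsto.comp hsqt
    convert this using 2
    all_goals simp
  have hminz : IsMinSeq Y π f t y z := by
    unfold IsMinSeq
    refine tendsto_of_tendsto_of_tendsto_of_le_of_le' tendsto_const_nhds hupperlim ?_ ?_
    · filter_upwards [hgood] with k hk
      exact (hkey k hk.1 hk.2).1
    · filter_upwards [hgood] with k hk
      have h2 := (hkey k hk.1 hk.2).2
      have h3 := hlip (sq k) hk.1 hk.2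
      have h4 : 0 ≤ (D k)^2 * ((t - sq k)/(2*(sq k)*t)) := by
        have h0 : 0 ≤ (t - sq k)/(2*(sq k)*t) :=
          div_nonneg (by linarith [hk.2]) (le_of_lt (by nlinarith [mul_pos hk.1 ht]))
        exact mul_nonneg (sq_nonneg _) h0
      linarith
  have hliminfD : dm ≤ Filter.liminf D Filter.atTop := by
    rw [hiDmA]
    exact csInf_le hbddA ⟨z, hminz, rfl⟩
  -- slope bounds
  have hslope_le : ∀ k, 0 < sq k → sq k < t →
      slope (fun s => iQ Y π f s y) t (sq k) ≤ -(D k)^2/(2*t^2) + (t - sq k) := by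
    intro k h1 h2
    rw [slope_def_field]
    have hk2 := (hkey k h1 h2).2
    have hk1 := (hkey k h1 h2).1
    have hnum : iQ Y π f (sq k) y - iQ Y π f t y
        > (D k)^2 * ((t - sq k)/(2*(sq k)*t)) - (t - sq k)^2 := by linarith
    have hden : sq k - t < 0 := by linarith
    rw [div_le_iff_of_neg hden]
    have hD2 : 0 ≤ (D k)^2 := sq_nonneg _
    have hfrac : (t - sq k)/(2*t^2) ≤ (t - sq k)/(2*(sq k)*t) :=
      div_le_div_of_nonneg_left (by linarith) (by positivity) (by nlinarith)
    have hcmp : (D k)^2 * ((t - sq k)/(2*t^2)) ≤ (D k)^2 * ((t - sq k)/(2*(sq k)*t)) :=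
      mul_le_mul_of_nonneg_left hfrac hD2
    rw [expand_aux1 (ne_of_gt ht) ((D k)^2) (sq k)]
    linarith
  have hslope_ge : ∀ k, 0 < sq k → sq k < t →
      -dm^2/(2*(sq k)*t) ≤ slope (fun s => iQ Y π f s y) t (sq k) := by
    intro k h1 h2
    rw [slope_def_field]
    have hs1 := step1 (sq k) h1 h2
    have hden : sq k - t < 0 := by linarith
    rw [le_div_iff_of_neg hden]
    rw [expand_aux2 (ne_of_gt h1) (ne_of_gt ht) (dm^2)]
    exact hs1
  -- conclude via order topology
  rw [tendsto_order]
  constructor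
  · -- b < L → eventually b < slope
    intro b hb
    have hlow : Filter.Tendsto (fun k => -dm^2/(2*(sq k)*t)) Filter.atTop (𝓝 L) := by
      have hcont : ContinuousAt (fun x : ℝ => -dm^2/(2*x*t)) t := by
        apply ContinuousAt.div continuousAt_const (by fun_prop)
        positivity
      have h5 := hcont.tendsto.comp hsqt
      have heq : -dm^2/(2*t*t) = -dm^2/(2*t^2) := by ring
      rw [hL, ← heq]
      exact h5
    have hev := hlow.eventually_const_lt hb
    filter_upwards [hev, hgood] with k hk1 hk2
    exact lt_of_lt_of_le hk1 (hslope_ge k hk2.1 hk2.2)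
  · -- L < b → eventually slope < b
    intro b hb
    set ε : ℝ := b - L with hε
    have hε0 : 0 < ε := by rw [hε]; linarith
    set δ : ℝ := ε * t^2 / (4*(M+1)) with hδ
    have hδ0 : 0 < δ := by rw [hδ]; positivity
    have hevD : ∀ᶠ k in Filter.atTop, dm - δ < D k := by
      exact Filter.eventually_lt_of_lt_liminf (lt_of_lt_of_le (by linarith) hliminfD)
        (Filter.isBoundedUnder_of ⟨0, fun k => (hDb k).1⟩)
    have hevs : ∀ᶠ k in Filter.atTop, t - sq k < ε/4 := by
      have := hsqt.eventually_const_lt (show t - ε/4 < t by linarith)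
      filter_upwards [this] with k hk; linarith
    filter_upwards [hevD, hevs, hgood] with k h1 h2 h3
    have hs := hslope_le k h3.1 h3.2
    have hDk := hDb k
    -- dm^2 - (D k)^2 ≤ 2*M*δ + δ^2 type bound; we use: dm^2 ≤ (D k)^2 + 2*(M+1)*δ
    have hsq : dm^2 ≤ (D k)^2 + 2*(M+1)*δ := by
      rcases le_or_gt dm (D k) with h | h
      · nlinarith
      · nlinarith
    have h2t : (0:ℝ) < 2*t^2 := by positivity
    have hMpos : (0:ℝ) < M + 1 := by linarith
    have hδval : 2*(M+1)*δ = ε * t^2 / 2 := by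
      rw [hδ]; exact expand_aux4 (ne_of_gt hMpos) ε t
    have hnum : -(D k)^2 ≤ -dm^2 + ε*t^2/2 := by nlinarith
    have hstep : -(D k)^2/(2*t^2) ≤ L + ε/4 := by
      have h9 : -(D k)^2/(2*t^2) ≤ -dm^2/(2*t^2) + ε/4 :=
        calc -(D k)^2/(2*t^2) ≤ (-dm^2 + ε*t^2/2)/(2*t^2) :=
              (div_le_div_iff_of_pos_right h2t).mpr hnum
          _ = -dm^2/(2*t^2) + ε/4 := expand_aux3 (ne_of_gt ht) (dm^2) ε
      rw [hL]
      exact h9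
    have hfin : slope (fun s => iQ Y π f s y) t (sq k) ≤ L + ε/4 + ε/4 := by linarith
    show slope (fun s => iQ Y π f s y) t (sq k) < b
    rw [hε] at hfin
    linarith
end

section
/- For every bounded continuous section f of π, every y ∈ Y and every t > 0, the map s ↦ iQ_s f(y) is differentiable at t if and only if iD⁺f(y, t) = iD⁻f(y, t). -/
open Metric Set Filter Topology MeasureTheory

set_option linter.unusedSectionVars false
namespace HL12

variable {Z : Type*} [Nonempty Z]

noncomputable def Qa (a b : Z → ℝ) (r : ℝ) : ℝ := ⨅ z, (a z + b z * r)

theorem bddBelow_affine {a b : Z → ℝ} {C B : ℝ} (ha : ∀ z, -C ≤ a z)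
    (hb0 : ∀ z, 0 ≤ b z) (hbB : ∀ z, b z ≤ B) (r : ℝ) :
    BddBelow (Set.range fun z => a z + b z * r) := by
  refine ⟨-C - B * |r|, ?_⟩
  rintro x ⟨z, rfl⟩
  have h1 : |b z * r| ≤ B * |r| := by
    rw [abs_mul, abs_of_nonneg (hb0 z)]
    exact mul_le_mul_of_nonneg_right (hbB z) (abs_nonneg r)
  have h2 := neg_abs_le (b z * r)
  have := ha z
  simp only
  linarith

theorem Qa_le {a b : Z → ℝ} {C B : ℝ} (ha : ∀ z, -C ≤ a z)
    (hb0 : ∀ z, 0 ≤ b z) (hbB : ∀ z, b z ≤ B) (z : Z) (r : ℝ) :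
    Qa a b r ≤ a z + b z * r :=
  ciInf_le (bddBelow_affine ha hb0 hbB r) z

theorem Qa_mono {a b : Z → ℝ} {C B : ℝ} (ha : ∀ z, -C ≤ a z)
    (hb0 : ∀ z, 0 ≤ b z) (hbB : ∀ z, b z ≤ B) {r r' : ℝ} (h : r ≤ r') :
    Qa a b r ≤ Qa a b r' := by
  refine le_ciInf fun z => (Qa_le ha hb0 hbB z r).trans ?_
  have := hb0 z
  nlinarith

theorem Qa_lip {a b : Z → ℝ} {C B : ℝ} (ha : ∀ z, -C ≤ a z)
    (hb0 : ∀ z, 0 ≤ b z) (hbB : ∀ z, b z ≤ B) (r r' : ℝ) :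
    Qa a b r ≤ Qa a b r' + B * |r - r'| := by
  have h : ∀ z, Qa a b r - B * |r - r'| ≤ a z + b z * r' := by
    intro z
    have h1 := Qa_le ha hb0 hbB z r
    have h2 : |b z * (r - r')| ≤ B * |r - r'| := by
      rw [abs_mul, abs_of_nonneg (hb0 z)]
      exact mul_le_mul_of_nonneg_right (hbB z) (abs_nonneg _)
    have h3 := le_abs_self (b z * (r - r'))
    nlinarith [mul_sub (b z) r r']
  have := le_ciInf h
  unfold Qa at *
  linarith

theorem Qa_concave {a b : Z → ℝ} {C B : ℝ} (ha : ∀ z, -C ≤ a z)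
    (hb0 : ∀ z, 0 ≤ b z) (hbB : ∀ z, b z ≤ B) :
    ConcaveOn ℝ Set.univ (Qa a b) := by
  refine ⟨convex_univ, fun x _ y _ p q hp hq hpq => ?_⟩
  refine le_ciInf fun z => ?_
  have h1 := Qa_le ha hb0 hbB z x
  have h2 := Qa_le ha hb0 hbB z y
  have key : p * (a z + b z * x) + q * (a z + b z * y)
      = a z + b z * (p • x + q • y) := by
    simp only [smul_eq_mul]
    linear_combination (a z) * hpq
  calc p • Qa a b x + q • Qa a b y
      ≤ p * (a z + b z * x) + q * (a z + b z * y) := by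
        simp only [smul_eq_mul]
        exact add_le_add (mul_le_mul_of_nonneg_left h1 hp) (mul_le_mul_of_nonneg_left h2 hq)
    _ = a z + b z * (p • x + q • y) := key

theorem slope_nonneg {a b : Z → ℝ} {C B : ℝ} (ha : ∀ z, -C ≤ a z)
    (hb0 : ∀ z, 0 ≤ b z) (hbB : ∀ z, b z ≤ B) (r₀ : ℝ) {r : ℝ} (h : r ≠ r₀) :
    0 ≤ slope (Qa a b) r₀ r := by
  rw [slope_def_field]
  rcases h.lt_or_gt with h' | h'
  · rw [← neg_div_neg_eq, neg_sub, neg_sub]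
    exact div_nonneg (by linarith [Qa_mono ha hb0 hbB (le_of_lt h')]) (by linarith)
  · exact div_nonneg (by linarith [Qa_mono ha hb0 hbB (le_of_lt h')]) (by linarith)


theorem slope_le_B {a b : Z → ℝ} {C B : ℝ} (ha : ∀ z, -C ≤ a z)
    (hb0 : ∀ z, 0 ≤ b z) (hbB : ∀ z, b z ≤ B) (r₀ : ℝ) {r : ℝ} (h : r ≠ r₀) :
    slope (Qa a b) r₀ r ≤ B := by
  rw [slope_def_field]
  rcases h.lt_or_gt with h' | h'
  · have hl := Qa_lip ha hb0 hbB r₀ r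
    rw [abs_of_pos (by linarith : (0:ℝ) < r₀ - r)] at hl
    rw [div_le_iff_of_neg (by linarith : r - r₀ < 0)]
    nlinarith
  · have hl := Qa_lip ha hb0 hbB r r₀
    rw [abs_of_pos (by linarith : (0:ℝ) < r - r₀)] at hl
    rw [div_le_iff₀ (by linarith : (0:ℝ) < r - r₀)]
    nlinarith

noncomputable def dp (a b : Z → ℝ) (r₀ : ℝ) : ℝ := sSup (slope (Qa a b) r₀ '' Set.Ioi r₀)

noncomputable def dm (a b : Z → ℝ) (r₀ : ℝ) : ℝ := sInf (slope (Qa a b) r₀ '' Set.Iio r₀)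

theorem dp_nonempty (a b : Z → ℝ) (r₀ : ℝ) : (slope (Qa a b) r₀ '' Set.Ioi r₀).Nonempty :=
  ⟨_, Set.mem_image_of_mem _ (Set.mem_Ioi.2 (lt_add_one r₀))⟩

theorem dm_nonempty (a b : Z → ℝ) (r₀ : ℝ) : (slope (Qa a b) r₀ '' Set.Iio r₀).Nonempty :=
  ⟨_, Set.mem_image_of_mem _ (Set.mem_Iio.2 (sub_one_lt r₀))⟩

theorem dp_bddAbove {a b : Z → ℝ} {C B : ℝ} (ha : ∀ z, -C ≤ a z)
    (hb0 : ∀ z, 0 ≤ b z) (hbB : ∀ z, b z ≤ B) (r₀ : ℝ) :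
    BddAbove (slope (Qa a b) r₀ '' Set.Ioi r₀) := by
  refine ⟨B, ?_⟩
  rintro x ⟨r, hr, rfl⟩
  exact slope_le_B ha hb0 hbB r₀ (ne_of_gt hr)

theorem dm_bddBelow {a b : Z → ℝ} {C B : ℝ} (ha : ∀ z, -C ≤ a z)
    (hb0 : ∀ z, 0 ≤ b z) (hbB : ∀ z, b z ≤ B) (r₀ : ℝ) :
    BddBelow (slope (Qa a b) r₀ '' Set.Iio r₀) := by
  refine ⟨0, ?_⟩
  rintro x ⟨r, hr, rfl⟩
  exact slope_nonneg ha hb0 hbB r₀ (ne_of_lt hr)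

theorem dp_nonneg {a b : Z → ℝ} {C B : ℝ} (ha : ∀ z, -C ≤ a z)
    (hb0 : ∀ z, 0 ≤ b z) (hbB : ∀ z, b z ≤ B) (r₀ : ℝ) :
    0 ≤ dp a b r₀ := by
  refine le_trans (slope_nonneg ha hb0 hbB r₀ (ne_of_gt (lt_add_one r₀)))
    (le_csSup (dp_bddAbove ha hb0 hbB r₀) ?_)
  exact Set.mem_image_of_mem _ (Set.mem_Ioi.2 (lt_add_one r₀))

theorem dm_nonneg {a b : Z → ℝ} {C B : ℝ} (ha : ∀ z, -C ≤ a z)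
    (hb0 : ∀ z, 0 ≤ b z) (hbB : ∀ z, b z ≤ B) (r₀ : ℝ) :
    0 ≤ dm a b r₀ := by
  refine le_csInf (dm_nonempty a b r₀) ?_
  rintro x ⟨r, hr, rfl⟩
  exact slope_nonneg ha hb0 hbB r₀ (ne_of_lt hr)

theorem slope_antitone {a b : Z → ℝ} {C B : ℝ} (ha : ∀ z, -C ≤ a z)
    (hb0 : ∀ z, 0 ≤ b z) (hbB : ∀ z, b z ≤ B) (r₀ : ℝ) {x y : ℝ}
    (hx : x ≠ r₀) (hy : y ≠ r₀) (hxy : x ≤ y) :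
    slope (Qa a b) r₀ y ≤ slope (Qa a b) r₀ x := by
  have h := (Qa_concave ha hb0 hbB (B := B)).slope_anti (Set.mem_univ r₀)
  exact h ⟨Set.mem_univ x, hx⟩ ⟨Set.mem_univ y, hy⟩ hxy

theorem tendsto_slope_right {a b : Z → ℝ} {C B : ℝ} (ha : ∀ z, -C ≤ a z)
    (hb0 : ∀ z, 0 ≤ b z) (hbB : ∀ z, b z ≤ B) (r₀ : ℝ) :
    Tendsto (slope (Qa a b) r₀) (𝓝[>] r₀) (𝓝 (dp a b r₀)) := by
  rw [tendsto_order]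
  constructor
  · intro c hc
    obtain ⟨x, hx, hcx⟩ := exists_lt_of_lt_csSup (dp_nonempty a b r₀) hc
    obtain ⟨r₁, hr₁, rfl⟩ := hx
    filter_upwards [Ioc_mem_nhdsGT hr₁] with r hr
    exact hcx.trans_le (slope_antitone ha hb0 hbB r₀ (ne_of_gt hr.1) (ne_of_gt hr₁) hr.2)
  · intro c hc
    filter_upwards [self_mem_nhdsWithin] with r hr
    exact lt_of_le_of_lt (le_csSup (dp_bddAbove ha hb0 hbB r₀)
      (Set.mem_image_of_mem _ hr)) hc

theorem tendsto_slope_left {a b : Z → ℝ} {C B : ℝ} (ha : ∀ z, -C ≤ a z)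
    (hb0 : ∀ z, 0 ≤ b z) (hbB : ∀ z, b z ≤ B) (r₀ : ℝ) :
    Tendsto (slope (Qa a b) r₀) (𝓝[<] r₀) (𝓝 (dm a b r₀)) := by
  rw [tendsto_order]
  constructor
  · intro c hc
    filter_upwards [self_mem_nhdsWithin] with r hr
    exact lt_of_lt_of_le hc (csInf_le (dm_bddBelow ha hb0 hbB r₀)
      (Set.mem_image_of_mem _ hr))
  · intro c hc
    obtain ⟨x, hx, hxc⟩ := exists_lt_of_csInf_lt (dm_nonempty a b r₀) hc
    obtain ⟨r₁, hr₁, rfl⟩ := hx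
    filter_upwards [Ico_mem_nhdsLT hr₁] with r hr
    exact lt_of_le_of_lt (slope_antitone ha hb0 hbB r₀ (ne_of_lt hr₁) (ne_of_lt hr.2) hr.1) hxc


theorem dp_le_liminf {a b : Z → ℝ} {C B : ℝ} (ha : ∀ z, -C ≤ a z)
    (hb0 : ∀ z, 0 ≤ b z) (hbB : ∀ z, b z ≤ B) (r₀ : ℝ) {u : ℕ → Z}
    (hu : Tendsto (fun n => a (u n) + b (u n) * r₀) atTop (𝓝 (Qa a b r₀))) :
    dp a b r₀ ≤ Filter.liminf (fun n => b (u n)) Filter.atTop := by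
  refine csSup_le (dp_nonempty a b r₀) ?_
  rintro x ⟨r, hr, rfl⟩
  rw [Set.mem_Ioi] at hr
  set c : ℕ → ℝ := fun n => (Qa a b r - (a (u n) + b (u n) * r₀)) / (r - r₀) with hc
  have hct : Tendsto c atTop (𝓝 ((Qa a b r - Qa a b r₀) / (r - r₀))) :=
    (hu.const_sub _).div_const _
  have hcb : ∀ n, c n ≤ b (u n) := by
    intro n
    rw [hc, div_le_iff₀ (by linarith : (0:ℝ) < r - r₀)]
    have h1 := Qa_le ha hb0 hbB (u n) r
    nlinarith
  have h2 : Filter.liminf c atTop ≤ Filter.liminf (fun n => b (u n)) atTop := by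
    refine Filter.liminf_le_liminf (Filter.Eventually.of_forall hcb)
      (hct.isBoundedUnder_ge) ?_
    exact Filter.isCoboundedUnder_ge_of_le _ (fun n => hbB (u n))
  rw [hct.liminf_eq] at h2
  rwa [slope_def_field]

theorem limsup_le_dm {a b : Z → ℝ} {C B : ℝ} (ha : ∀ z, -C ≤ a z)
    (hb0 : ∀ z, 0 ≤ b z) (hbB : ∀ z, b z ≤ B) (r₀ : ℝ) {u : ℕ → Z}
    (hu : Tendsto (fun n => a (u n) + b (u n) * r₀) atTop (𝓝 (Qa a b r₀))) :
    Filter.limsup (fun n => b (u n)) Filter.atTop ≤ dm a b r₀ := by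
  refine le_csInf (dm_nonempty a b r₀) ?_
  rintro x ⟨r, hr, rfl⟩
  rw [Set.mem_Iio] at hr
  set c : ℕ → ℝ := fun n => (Qa a b r - (a (u n) + b (u n) * r₀)) / (r - r₀) with hc
  have hct : Tendsto c atTop (𝓝 ((Qa a b r - Qa a b r₀) / (r - r₀))) :=
    (hu.const_sub _).div_const _
  have hcb : ∀ n, b (u n) ≤ c n := by
    intro n
    rw [hc, le_div_iff_of_neg (by linarith : r - r₀ < 0)]
    have h1 := Qa_le ha hb0 hbB (u n) r
    nlinarith
  have h2 : Filter.limsup (fun n => b (u n)) atTop ≤ Filter.limsup c atTop := by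
    refine Filter.limsup_le_limsup (Filter.Eventually.of_forall hcb) ?_ hct.isBoundedUnder_le
    exact Filter.isCoboundedUnder_le_of_le _ (fun n => hb0 (u n))
  rw [hct.limsup_eq] at h2
  rwa [slope_def_field]

theorem exists_minseq_right {a b : Z → ℝ} {C B : ℝ} (ha : ∀ z, -C ≤ a z)
    (hb0 : ∀ z, 0 ≤ b z) (hbB : ∀ z, b z ≤ B) (r₀ : ℝ) :
    ∃ u : ℕ → Z, Tendsto (fun n => a (u n) + b (u n) * r₀) atTop (𝓝 (Qa a b r₀)) ∧
      Filter.limsup (fun n => b (u n)) Filter.atTop ≤ dp a b r₀ := by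
  have hex : ∀ n : ℕ, ∃ z : Z,
      a z + b z * (r₀ + 1/(n+1)) < Qa a b (r₀ + 1/(n+1)) + (1/(n+1))^2 := by
    intro n
    have hlt : Qa a b (r₀ + 1/(n+1)) < Qa a b (r₀ + 1/(n+1)) + (1/(n+1))^2 := by
      have : (0:ℝ) < (1/(n+1):ℝ)^2 := by positivity
      linarith
    exact exists_lt_of_ciInf_lt hlt
  choose u hu using hex
  have hε : ∀ n : ℕ, (0:ℝ) < 1/((n:ℝ)+1) := by intro n; positivity
  -- basic inequalities
  have key1 : ∀ n : ℕ, Qa a b r₀ ≤ a (u n) + b (u n) * r₀ :=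
    fun n => Qa_le ha hb0 hbB (u n) r₀
  have key2 : ∀ n : ℕ, a (u n) + b (u n) * r₀
      ≤ Qa a b r₀ + B * (1/((n:ℝ)+1)) + (1/((n:ℝ)+1))^2 := by
    intro n
    have h1 := hu n
    have h2 : Qa a b (r₀ + 1/((n:ℝ)+1)) ≤ Qa a b r₀ + B * |r₀ + 1/((n:ℝ)+1) - r₀| :=
      Qa_lip ha hb0 hbB _ _
    rw [show r₀ + 1/((n:ℝ)+1) - r₀ = 1/((n:ℝ)+1) by ring, abs_of_pos (hε n)] at h2
    have h3 : 0 ≤ b (u n) * (1/((n:ℝ)+1)) := mul_nonneg (hb0 _) (hε n).le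
    nlinarith [mul_add (b (u n)) r₀ (1/((n:ℝ)+1))]
  have htend0 : Tendsto (fun n : ℕ => 1/((n:ℝ)+1)) atTop (𝓝 0) :=
    tendsto_one_div_add_atTop_nhds_zero_nat
  have hmin : Tendsto (fun n => a (u n) + b (u n) * r₀) atTop (𝓝 (Qa a b r₀)) := by
    refine tendsto_of_tendsto_of_tendsto_of_le_of_le (tendsto_const_nhds) ?_ key1 key2
    have : Tendsto (fun n : ℕ => Qa a b r₀ + B * (1/((n:ℝ)+1)) + (1/((n:ℝ)+1))^2) atTop
        (𝓝 (Qa a b r₀ + B * 0 + 0^2)) := by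
      exact ((tendsto_const_nhds.add (htend0.const_mul B)).add (htend0.pow 2))
    simpa using this
  refine ⟨u, hmin, ?_⟩
  have key3 : ∀ n : ℕ, b (u n) ≤ dp a b r₀ + 1/((n:ℝ)+1) := by
    intro n
    set ε : ℝ := 1/((n:ℝ)+1) with hεdef
    have hεpos : 0 < ε := hε n
    have hS : slope (Qa a b) r₀ (r₀ + ε) ≤ dp a b r₀ :=
      le_csSup (dp_bddAbove ha hb0 hbB r₀)
        (Set.mem_image_of_mem _ (Set.mem_Ioi.2 (by linarith)))
    rw [slope_def_field] at hS
    have hSd : (Qa a b (r₀ + ε) - Qa a b r₀) / (r₀ + ε - r₀) ≤ dp a b r₀ := hS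
    rw [show r₀ + ε - r₀ = ε by ring, div_le_iff₀ hεpos] at hSd
    have h1 := hu n
    have h0 := key1 n
    have hmul : a (u n) + b (u n) * (r₀ + ε) = a (u n) + b (u n) * r₀ + b (u n) * ε := by ring
    -- b (u n) * ε ≤ Qa (r₀+ε) - Qa r₀ + ε^2 ≤ dp * ε + ε^2
    nlinarith
  have hlim : Filter.limsup (fun n : ℕ => dp a b r₀ + 1/((n:ℝ)+1)) atTop = dp a b r₀ := by
    have : Tendsto (fun n : ℕ => dp a b r₀ + 1/((n:ℝ)+1)) atTop (𝓝 (dp a b r₀ + 0)) :=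
      tendsto_const_nhds.add htend0
    rw [add_zero] at this
    exact this.limsup_eq
  calc Filter.limsup (fun n => b (u n)) atTop
      ≤ Filter.limsup (fun n : ℕ => dp a b r₀ + 1/((n:ℝ)+1)) atTop := by
        refine Filter.limsup_le_limsup (Filter.Eventually.of_forall key3) ?_ ?_
        · exact Filter.isCoboundedUnder_le_of_le _ (fun n => hb0 (u n))
        · exact ⟨dp a b r₀ + 1, Filter.eventually_map.2 (Filter.Eventually.of_forall
            (fun n => by have := hε n; have : 1/((n:ℝ)+1) ≤ 1 := by
                          rw [div_le_one (by positivity)]; linarith [Nat.cast_nonneg (α := ℝ) n]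
                         linarith))⟩
    _ = dp a b r₀ := hlim


theorem exists_minseq_left {a b : Z → ℝ} {C B : ℝ} (ha : ∀ z, -C ≤ a z)
    (hb0 : ∀ z, 0 ≤ b z) (hbB : ∀ z, b z ≤ B) (r₀ : ℝ) :
    ∃ u : ℕ → Z, Tendsto (fun n => a (u n) + b (u n) * r₀) atTop (𝓝 (Qa a b r₀)) ∧
      dm a b r₀ ≤ Filter.liminf (fun n => b (u n)) Filter.atTop := by
  have hex : ∀ n : ℕ, ∃ z : Z,
      a z + b z * (r₀ - 1/(n+1)) < Qa a b (r₀ - 1/(n+1)) + (1/(n+1))^2 := by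
    intro n
    have hlt : Qa a b (r₀ - 1/(n+1)) < Qa a b (r₀ - 1/(n+1)) + (1/(n+1))^2 := by
      have : (0:ℝ) < (1/(n+1):ℝ)^2 := by positivity
      linarith
    exact exists_lt_of_ciInf_lt hlt
  choose u hu using hex
  have hε : ∀ n : ℕ, (0:ℝ) < 1/((n:ℝ)+1) := by intro n; positivity
  have key1 : ∀ n : ℕ, Qa a b r₀ ≤ a (u n) + b (u n) * r₀ :=
    fun n => Qa_le ha hb0 hbB (u n) r₀
  have key2 : ∀ n : ℕ, a (u n) + b (u n) * r₀
      ≤ Qa a b r₀ + B * (1/((n:ℝ)+1)) + (1/((n:ℝ)+1))^2 + B * (1/((n:ℝ)+1)) := by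
    intro n
    have h1 := hu n
    have h2 : Qa a b (r₀ - 1/((n:ℝ)+1)) ≤ Qa a b r₀ + B * |r₀ - 1/((n:ℝ)+1) - r₀| :=
      Qa_lip ha hb0 hbB _ _
    rw [show r₀ - 1/((n:ℝ)+1) - r₀ = -(1/((n:ℝ)+1)) by ring, abs_neg,
      abs_of_pos (hε n)] at h2
    have h3 : b (u n) * (1/((n:ℝ)+1)) ≤ B * (1/((n:ℝ)+1)) :=
      mul_le_mul_of_nonneg_right (hbB _) (hε n).le
    nlinarith [mul_sub (b (u n)) r₀ (1/((n:ℝ)+1))]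
  have htend0 : Tendsto (fun n : ℕ => 1/((n:ℝ)+1)) atTop (𝓝 0) :=
    tendsto_one_div_add_atTop_nhds_zero_nat
  have hmin : Tendsto (fun n => a (u n) + b (u n) * r₀) atTop (𝓝 (Qa a b r₀)) := by
    refine tendsto_of_tendsto_of_tendsto_of_le_of_le (tendsto_const_nhds) ?_ key1 key2
    have : Tendsto (fun n : ℕ => Qa a b r₀ + B * (1/((n:ℝ)+1)) + (1/((n:ℝ)+1))^2
        + B * (1/((n:ℝ)+1))) atTop (𝓝 (Qa a b r₀ + B * 0 + 0^2 + B * 0)) :=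
      (((tendsto_const_nhds.add (htend0.const_mul B)).add (htend0.pow 2)).add
        (htend0.const_mul B))
    simpa using this
  refine ⟨u, hmin, ?_⟩
  have key3 : ∀ n : ℕ, dm a b r₀ - 1/((n:ℝ)+1) ≤ b (u n) := by
    intro n
    set ε : ℝ := 1/((n:ℝ)+1) with hεdef
    have hεpos : 0 < ε := hε n
    have hS : dm a b r₀ ≤ slope (Qa a b) r₀ (r₀ - ε) :=
      csInf_le (dm_bddBelow ha hb0 hbB r₀)
        (Set.mem_image_of_mem _ (Set.mem_Iio.2 (by linarith)))
    rw [slope_def_field] at hS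
    have hSd : dm a b r₀ ≤ (Qa a b (r₀ - ε) - Qa a b r₀) / (r₀ - ε - r₀) := hS
    rw [show r₀ - ε - r₀ = -ε by ring, le_div_iff_of_neg (by linarith : -ε < 0)] at hSd
    have h1 := hu n
    have h0 := key1 n
    nlinarith [mul_sub (b (u n)) r₀ ε]
  have hlim : Filter.liminf (fun n : ℕ => dm a b r₀ - 1/((n:ℝ)+1)) atTop = dm a b r₀ := by
    have : Tendsto (fun n : ℕ => dm a b r₀ - 1/((n:ℝ)+1)) atTop (𝓝 (dm a b r₀ - 0)) :=
      tendsto_const_nhds.sub htend0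
    rw [sub_zero] at this
    exact this.liminf_eq
  calc dm a b r₀ = Filter.liminf (fun n : ℕ => dm a b r₀ - 1/((n:ℝ)+1)) atTop := hlim.symm
    _ ≤ Filter.liminf (fun n => b (u n)) atTop := by
        refine Filter.liminf_le_liminf (Filter.Eventually.of_forall key3) ?_ ?_
        · exact ⟨dm a b r₀ - 1, Filter.eventually_map.2 (Filter.Eventually.of_forall
            (fun n => by
              have h1 : 1/((n:ℝ)+1) ≤ 1 := by
                rw [div_le_one (by positivity)]; linarith [Nat.cast_nonneg (α := ℝ) n]
              linarith))⟩
        · exact Filter.isCoboundedUnder_ge_of_le _ (fun n => hbB (u n))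

theorem differentiableAt_iff_dp_eq_dm {a b : Z → ℝ} {C B : ℝ} (ha : ∀ z, -C ≤ a z)
    (hb0 : ∀ z, 0 ≤ b z) (hbB : ∀ z, b z ≤ B) (r₀ : ℝ) :
    DifferentiableAt ℝ (Qa a b) r₀ ↔ dp a b r₀ = dm a b r₀ := by
  constructor
  · intro hd
    have hder := hd.hasDerivAt
    rw [hasDerivAt_iff_tendsto_slope] at hder
    have hmono : 𝓝[>] r₀ ≤ 𝓝[≠] r₀ :=
      nhdsWithin_mono r₀ (fun x hx => ne_of_gt hx)
    have hmono' : 𝓝[<] r₀ ≤ 𝓝[≠] r₀ :=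
      nhdsWithin_mono r₀ (fun x hx => ne_of_lt hx)
    have h1 : dp a b r₀ = deriv (Qa a b) r₀ :=
      tendsto_nhds_unique (tendsto_slope_right ha hb0 hbB r₀) (hder.mono_left hmono)
    have h2 : dm a b r₀ = deriv (Qa a b) r₀ :=
      tendsto_nhds_unique (tendsto_slope_left ha hb0 hbB r₀) (hder.mono_left hmono')
    rw [h1, h2]
  · intro hdd
    have : HasDerivAt (Qa a b) (dp a b r₀) r₀ := by
      rw [hasDerivAt_iff_tendsto_slope, ← nhdsLT_sup_nhdsGT, tendsto_sup]
      refine ⟨?_, tendsto_slope_right ha hb0 hbB r₀⟩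
      rw [hdd]
      exact tendsto_slope_left ha hb0 hbB r₀
    exact this.differentiableAt

end HL12

set_option maxHeartbeats 1000000 in
theorem stmt_12 (κ : ℕ) (hκ : 1 ≤ κ)
    (Y : Set (EuclideanSpace ℝ (Fin κ))) (hY : Y.Nonempty) (hYb : Bornology.IsBounded Y)
    (π : EuclideanSpace ℝ (Fin κ) → Y) (hπc : Continuous π) (hπo : IsOpenMap π)
    (hπs : Function.Surjective π)
    (f : Y → EuclideanSpace ℝ (Fin κ)) (hfc : Continuous f)
    (hfb : Bornology.IsBounded (Set.range f)) (hsec : ∀ y : Y, π (f y) = y)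

    (y : Y) (t : ℝ) (ht : 0 < t) :
    DifferentiableAt ℝ (fun s => iQ Y π f s y) t ↔ iDp Y π f y t = iDm Y π f y t := by
  haveI : Nonempty Y := hY.to_subtype
  haveI : Nonempty (Fin κ) := ⟨⟨0, hκ⟩⟩
  set A : Y → ℝ := fun z => ⨆ j, f z j with hA
  set D : Y → ℝ := fun z => Metric.infDist (f z) (π ⁻¹' {y}) with hD
  set b : Y → ℝ := fun z => (D z)^2 with hb
  obtain ⟨R, hR⟩ := hfb.subset_closedBall 0
  have hnorm : ∀ z : Y, ‖f z‖ ≤ R := fun z => by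
    have := hR (Set.mem_range_self z)
    rwa [Metric.mem_closedBall, dist_zero_right] at this
  have hcoord : ∀ (x : EuclideanSpace ℝ (Fin κ)) (j : Fin κ), |x j| ≤ ‖x‖ := by
    intro x j
    calc |x j| = Real.sqrt ((x j)^2) := (Real.sqrt_sq_eq_abs _).symm
      _ ≤ Real.sqrt (∑ i, ‖x i‖^2) := Real.sqrt_le_sqrt (by
          have hxj : (x j)^2 = ‖x j‖^2 := by rw [Real.norm_eq_abs, sq_abs]
          rw [hxj]
          exact Finset.single_le_sum (f := fun i => ‖x i‖^2)
            (fun i _ => sq_nonneg _) (Finset.mem_univ j))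
      _ = ‖x‖ := (EuclideanSpace.norm_eq x).symm
  have haC : ∀ z : Y, -R ≤ A z := by
    intro z
    have h0 : f z ⟨0, hκ⟩ ≤ A z :=
      le_ciSup (Set.Finite.bddAbove (Set.finite_range _)) _
    have h1 := hcoord (f z) ⟨0, hκ⟩
    have h2 := hnorm z
    have h3 := neg_abs_le (f z ⟨0, hκ⟩)
    linarith
  have hfy : f y ∈ π ⁻¹' {y} := by
    simp only [Set.mem_preimage, Set.mem_singleton_iff]
    exact hsec y
  have hD0 : ∀ z : Y, 0 ≤ D z := fun z => Metric.infDist_nonneg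
  have hDB : ∀ z : Y, D z ≤ 2*R := by
    intro z
    refine le_trans (Metric.infDist_le_dist_of_mem hfy) ?_
    have h1 := hnorm z
    have h2 := hnorm y
    calc dist (f z) (f y) = ‖f z - f y‖ := dist_eq_norm _ _
      _ ≤ ‖f z‖ + ‖f y‖ := norm_sub_le _ _
      _ ≤ 2*R := by linarith
  have hb0 : ∀ z : Y, 0 ≤ b z := fun z => sq_nonneg _
  have hbB : ∀ z : Y, b z ≤ (2*R)^2 := fun z =>
    pow_le_pow_left₀ (hD0 z) (hDB z) 2
  have hr₀pos : (0:ℝ) < 1/(2*t) := by positivity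
  set r₀ : ℝ := 1/(2*t) with hr₀
  -- identification of iQ with Qa
  have hiq : ∀ s : ℝ, iQ Y π f s y = HL12.Qa A b (1/(2*s)) := by
    intro s
    rw [iQ, HL12.Qa]
    congr 1
    funext z
    rw [hlF, div_eq_mul_one_div]
  have hhlF : ∀ z : Y, hlF Y π f t y z = A z + b z * r₀ := by
    intro z
    rw [hlF, div_eq_mul_one_div]
  have hiqr : iQ Y π f t y = HL12.Qa A b r₀ := hiq t
  have hminseq : ∀ u : ℕ → Y, IsMinSeq Y π f t y u ↔
      Tendsto (fun n => A (u n) + b (u n) * r₀) atTop (𝓝 (HL12.Qa A b r₀)) := by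
    intro u
    rw [IsMinSeq, hiqr]
    constructor
    · intro h; exact h.congr (fun n => hhlF (u n))
    · intro h; exact h.congr (fun n => (hhlF (u n)).symm)
  -- differentiability transfer
  have hdiff : DifferentiableAt ℝ (fun s => iQ Y π f s y) t ↔
      DifferentiableAt ℝ (HL12.Qa A b) r₀ := by
    have h2t : (2:ℝ)*t ≠ 0 := by positivity
    have h2r : (2:ℝ)*r₀ ≠ 0 := by positivity
    constructor
    · intro hd
      have hg : DifferentiableAt ℝ (fun x : ℝ => 1/(2*x)) r₀ := by
        simp only [one_div]
        exact (differentiableAt_id.const_mul 2).inv h2r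
      have hgr : (fun x : ℝ => 1/(2*x)) r₀ = t := by
        rw [hr₀]; field_simp
      have hgr' : 1/(2*r₀) = t := by rw [hr₀]; field_simp
      have hcomp : DifferentiableAt ℝ ((fun s => iQ Y π f s y) ∘ (fun x : ℝ => 1/(2*x))) r₀ :=
        DifferentiableAt.comp r₀ (by simp only [one_div] at hgr' ⊢; rw [hgr']; exact hd) hg
      have hev : (HL12.Qa A b) =ᶠ[𝓝 r₀] ((fun s => iQ Y π f s y) ∘ (fun x : ℝ => 1/(2*x))) := by
        filter_upwards [isOpen_Ioi.mem_nhds (Set.mem_Ioi.2 hr₀pos)] with r hr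
        rw [Set.mem_Ioi] at hr
        simp only [Function.comp_apply]
        rw [hiq]
        congr 1
        field_simp
      exact hev.differentiableAt_iff.mpr hcomp
    · intro hQ
      have hg : DifferentiableAt ℝ (fun s : ℝ => 1/(2*s)) t := by
        simp only [one_div]
        exact (differentiableAt_id.const_mul 2).inv h2t
      have heq : (fun s => iQ Y π f s y) = (HL12.Qa A b) ∘ (fun s : ℝ => 1/(2*s)) := by
        funext s; exact hiq s
      rw [heq]
      exact DifferentiableAt.comp t hQ hg
  rw [hdiff, HL12.differentiableAt_iff_dp_eq_dm haC hb0 hbB r₀]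
  -- boundedness facts for any sequence
  have hsq_mono : Monotone Real.sqrt := fun _ _ h => Real.sqrt_le_sqrt h
  have bdd_le : ∀ u : ℕ → Y, Filter.IsBoundedUnder (· ≤ ·) atTop (fun n => b (u n)) :=
    fun u => Filter.isBoundedUnder_of ⟨(2*R)^2, fun n => hbB (u n)⟩
  have bdd_ge : ∀ u : ℕ → Y, Filter.IsBoundedUnder (· ≥ ·) atTop (fun n => b (u n)) :=
    fun u => Filter.isBoundedUnder_of ⟨0, fun n => hb0 (u n)⟩
  have cobdd_le : ∀ u : ℕ → Y, Filter.IsCoboundedUnder (· ≤ ·) atTop (fun n => b (u n)) :=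
    fun u => Filter.isCoboundedUnder_le_of_le _ (fun n => hb0 (u n))
  have cobdd_ge : ∀ u : ℕ → Y, Filter.IsCoboundedUnder (· ≥ ·) atTop (fun n => b (u n)) :=
    fun u => Filter.isCoboundedUnder_ge_of_le _ (fun n => hbB (u n))
  have hsqrt_limsup : ∀ u : ℕ → Y,
      Filter.limsup (fun n => D (u n)) atTop = Real.sqrt (Filter.limsup (fun n => b (u n)) atTop) := by
    intro u
    have := hsq_mono.map_limsup_of_continuousAt (F := atTop) (fun n => b (u n))
      (Real.continuous_sqrt.continuousAt) (bdd_le u) (cobdd_le u)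
    rw [this]
    congr 1
    funext n
    simp only [Function.comp_apply, hb]
    exact (Real.sqrt_sq (hD0 (u n))).symm
  have hsqrt_liminf : ∀ u : ℕ → Y,
      Filter.liminf (fun n => D (u n)) atTop = Real.sqrt (Filter.liminf (fun n => b (u n)) atTop) := by
    intro u
    have := hsq_mono.map_liminf_of_continuousAt (F := atTop) (fun n => b (u n))
      (Real.continuous_sqrt.continuousAt) (cobdd_ge u) (bdd_ge u)
    rw [this]
    congr 1
    funext n
    simp only [Function.comp_apply, hb]
    exact (Real.sqrt_sq (hD0 (u n))).symm
  have hDbdd_le : ∀ u : ℕ → Y, Filter.IsBoundedUnder (· ≤ ·) atTop (fun n => D (u n)) :=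
    fun u => Filter.isBoundedUnder_of ⟨2*R, fun n => hDB (u n)⟩
  have hDbdd_ge : ∀ u : ℕ → Y, Filter.IsBoundedUnder (· ≥ ·) atTop (fun n => D (u n)) :=
    fun u => Filter.isBoundedUnder_of ⟨0, fun n => hD0 (u n)⟩
  have hliminf_le_limsup : ∀ u : ℕ → Y,
      Filter.liminf (fun n => D (u n)) atTop ≤ Filter.limsup (fun n => D (u n)) atTop :=
    fun u => Filter.liminf_le_limsup (hDbdd_le u) (hDbdd_ge u)
  -- the two existence sequences
  obtain ⟨u₀, hu₀min, hu₀⟩ := HL12.exists_minseq_right haC hb0 hbB r₀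
  obtain ⟨u₁, hu₁min, hu₁⟩ := HL12.exists_minseq_left haC hb0 hbB r₀
  have hu₀min' : IsMinSeq Y π f t y u₀ := (hminseq u₀).mpr hu₀min
  have hu₁min' : IsMinSeq Y π f t y u₁ := (hminseq u₁).mpr hu₁min
  have hdp0 : 0 ≤ HL12.dp A b r₀ := HL12.dp_nonneg haC hb0 hbB r₀
  have hdm0 : 0 ≤ HL12.dm A b r₀ := HL12.dm_nonneg haC hb0 hbB r₀
  -- iDp = sqrt dm
  have hiDp : iDp Y π f y t = Real.sqrt (HL12.dm A b r₀) := by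
    rw [iDp]
    apply le_antisymm
    · refine csSup_le ⟨_, ⟨u₀, hu₀min', rfl⟩⟩ ?_
      rintro x ⟨u, humin, rfl⟩
      rw [hsqrt_limsup u]
      exact hsq_mono (HL12.limsup_le_dm haC hb0 hbB r₀ ((hminseq u).mp humin))
    · have hbddA : BddAbove { a : ℝ | ∃ u : ℕ → Y, IsMinSeq Y π f t y u ∧
          a = Filter.limsup (fun n => Metric.infDist (f (u n)) (π ⁻¹' {y})) atTop } := by
        refine ⟨Real.sqrt (HL12.dm A b r₀), ?_⟩
        rintro x ⟨u, humin, rfl⟩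
        rw [hsqrt_limsup u]
        exact hsq_mono (HL12.limsup_le_dm haC hb0 hbB r₀ ((hminseq u).mp humin))
      have hmem : Filter.limsup (fun n => Metric.infDist (f (u₁ n)) (π ⁻¹' {y})) atTop ∈
          { a : ℝ | ∃ u : ℕ → Y, IsMinSeq Y π f t y u ∧
            a = Filter.limsup (fun n => Metric.infDist (f (u n)) (π ⁻¹' {y})) atTop } :=
        ⟨u₁, hu₁min', rfl⟩
      refine le_trans ?_ (le_csSup hbddA hmem)
      calc Real.sqrt (HL12.dm A b r₀)
          ≤ Real.sqrt (Filter.liminf (fun n => b (u₁ n)) atTop) := hsq_mono hu₁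
        _ = Filter.liminf (fun n => D (u₁ n)) atTop := (hsqrt_liminf u₁).symm
        _ ≤ Filter.limsup (fun n => D (u₁ n)) atTop := hliminf_le_limsup u₁
  -- iDm = sqrt dp
  have hiDm : iDm Y π f y t = Real.sqrt (HL12.dp A b r₀) := by
    rw [iDm]
    apply le_antisymm
    · have hbddB : BddBelow { a : ℝ | ∃ u : ℕ → Y, IsMinSeq Y π f t y u ∧
          a = Filter.liminf (fun n => Metric.infDist (f (u n)) (π ⁻¹' {y})) atTop } := by
        refine ⟨0, ?_⟩
        rintro x ⟨u, humin, rfl⟩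
        rw [hsqrt_liminf u]
        exact Real.sqrt_nonneg _
      have hmem : Filter.liminf (fun n => Metric.infDist (f (u₀ n)) (π ⁻¹' {y})) atTop ∈
          { a : ℝ | ∃ u : ℕ → Y, IsMinSeq Y π f t y u ∧
            a = Filter.liminf (fun n => Metric.infDist (f (u n)) (π ⁻¹' {y})) atTop } :=
        ⟨u₀, hu₀min', rfl⟩
      refine le_trans (csInf_le hbddB hmem) ?_
      calc Filter.liminf (fun n => D (u₀ n)) atTop
          ≤ Filter.limsup (fun n => D (u₀ n)) atTop := hliminf_le_limsup u₀
        _ = Real.sqrt (Filter.limsup (fun n => b (u₀ n)) atTop) := hsqrt_limsup u₀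
        _ ≤ Real.sqrt (HL12.dp A b r₀) := hsq_mono hu₀
    · refine le_csInf ⟨_, ⟨u₀, hu₀min', rfl⟩⟩ ?_
      rintro x ⟨u, humin, rfl⟩
      rw [hsqrt_liminf u]
      exact hsq_mono (HL12.dp_le_liminf haC hb0 hbB r₀ ((hminseq u).mp humin))
  rw [hiDp, hiDm]
  constructor
  · intro h; rw [h]
  · intro h
    exact ((Real.sqrt_inj hdm0 hdp0).1 h).symm
end

section
/- For every bounded continuous section f of π, every y ∈ Y and all 0 < τ₁ < τ₂, there exists a constant C ≥ 0 such that the map t ↦ iQ_t f(y) − C t² is concave on (τ₁, τ₂); in other words, t ↦ iQ_t f(y) is locally semiconcave on (0, ∞). -/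
open Metric Set Filter Topology MeasureTheory

/-- On `(τ₁, τ₂)` with `0 < τ₁` and `0 ≤ B ≤ 2*C*τ₁^3`, the map `t ↦ C*t^2 - B/(2*t)`
is convex. -/
lemma aux_convex (τ₁ τ₂ B C : ℝ) (hτ₁ : 0 < τ₁) (hB : 0 ≤ B) (hBC : B ≤ 2*C*τ₁^3) :
    ConvexOn ℝ (Set.Ioo τ₁ τ₂) (fun t => C*t^2 - B/(2*t)) := by
  have hd1 : ∀ x : ℝ, x ≠ 0 →
      HasDerivAt (fun t => C*t^2 - B/(2*t)) (2*C*x + B/(2*x^2)) x := by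
    intro x hx
    have h1 : HasDerivAt (fun t : ℝ => C*t^2) (C*(2*x^1)) x :=
      (hasDerivAt_pow 2 x).const_mul C
    have hden : HasDerivAt (fun t : ℝ => 2*t) 2 x := by
      simpa using (hasDerivAt_id x).const_mul (2:ℝ)
    have h2 : HasDerivAt (fun t : ℝ => B/(2*t)) ((0*(2*x) - B*2)/(2*x)^2) x :=
      (hasDerivAt_const x B).div hden (mul_ne_zero two_ne_zero hx)
    have := h1.sub h2
    refine this.congr_deriv ?_
    field_simp
    ring
  have hd2 : ∀ x : ℝ, x ≠ 0 →
      HasDerivAt (fun t => 2*C*t + B/(2*t^2)) (2*C - B/x^3) x := by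
    intro x hx
    have h1 : HasDerivAt (fun t : ℝ => 2*C*t) (2*C*1) x :=
      (hasDerivAt_id x).const_mul (2*C)
    have hden : HasDerivAt (fun t : ℝ => 2*t^2) (2*(2*x^1)) x :=
      (hasDerivAt_pow 2 x).const_mul (2:ℝ)
    have h2 : HasDerivAt (fun t : ℝ => B/(2*t^2)) ((0*(2*x^2) - B*(2*(2*x^1)))/(2*x^2)^2) x :=
      (hasDerivAt_const x B).div hden (by positivity)
    have := h1.add h2
    refine this.congr_deriv ?_
    field_simp
    ring
  have hne : ∀ x ∈ Set.Ioo τ₁ τ₂, x ≠ 0 := fun x hx => ne_of_gt (hτ₁.trans hx.1)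
  refine convexOn_of_hasDerivWithinAt2_nonneg (convex_Ioo τ₁ τ₂)
    (f' := fun t => 2*C*t + B/(2*t^2)) (f'' := fun t => 2*C - B/t^3) ?_ ?_ ?_ ?_
  · apply ContinuousOn.sub (by fun_prop)
    exact ContinuousOn.div continuousOn_const (by fun_prop)
      (fun x hx => by simpa using hne x hx)
  · intro x hx
    rw [interior_Ioo] at hx
    exact (hd1 x (hne x hx)).hasDerivWithinAt
  · intro x hx
    rw [interior_Ioo] at hx
    exact (hd2 x (hne x hx)).hasDerivWithinAt
  · intro x hx
    rw [interior_Ioo] at hx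
    have hx0 : 0 < x := hτ₁.trans hx.1
    have h3 : τ₁^3 ≤ x^3 := pow_le_pow_left₀ hτ₁.le hx.1.le 3
    have hC : 0 ≤ 2*C := by nlinarith [pow_pos hτ₁ 3]
    have : B/x^3 ≤ 2*C := by
      rw [div_le_iff₀ (by positivity)]
      nlinarith
    linarith

theorem stmt_13 (κ : ℕ) (hκ : 1 ≤ κ)
    (Y : Set (EuclideanSpace ℝ (Fin κ))) (hY : Y.Nonempty) (hYb : Bornology.IsBounded Y)
    (π : EuclideanSpace ℝ (Fin κ) → Y) (hπc : Continuous π) (hπo : IsOpenMap π)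
    (hπs : Function.Surjective π)
    (f : Y → EuclideanSpace ℝ (Fin κ)) (hfc : Continuous f)
    (hfb : Bornology.IsBounded (Set.range f)) (hsec : ∀ y : Y, π (f y) = y)

    (y : Y) (τ₁ τ₂ : ℝ) (hτ₁ : 0 < τ₁) (hτ : τ₁ < τ₂) :
    ∃ C : ℝ, 0 ≤ C ∧
      ConcaveOn ℝ (Set.Ioo τ₁ τ₂) (fun t => iQ Y π f t y - C * t^2) := by
  haveI : Nonempty Y := hY.to_subtype
  haveI : Nonempty (Fin κ) := ⟨⟨0, hκ⟩⟩
  obtain ⟨D, hD⟩ := Metric.isBounded_iff.mp hfb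
  set Bz : Y → ℝ := fun z => (Metric.infDist (f z) (π ⁻¹' {y}))^2 with hBzdef
  have hBz0 : ∀ z, 0 ≤ Bz z := fun z => sq_nonneg _
  have hfy : f y ∈ π ⁻¹' {y} := by simp [hsec y]
  have hBzD : ∀ z, Bz z ≤ D^2 := by
    intro z
    have h1 : Metric.infDist (f z) (π ⁻¹' {y}) ≤ dist (f z) (f y) :=
      Metric.infDist_le_dist_of_mem hfy
    have h2 : dist (f z) (f y) ≤ D := hD (mem_range_self z) (mem_range_self y)
    exact pow_le_pow_left₀ Metric.infDist_nonneg (h1.trans h2) 2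
  set C : ℝ := D^2 / (2*τ₁^3) with hCdef
  have hC0 : 0 ≤ C := by positivity
  refine ⟨C, hC0, ?_⟩
  -- lower bound for the sup of coordinates
  obtain ⟨R, hR⟩ := hfb.subset_closedBall 0
  have hA : ∀ z : Y, -R ≤ ⨆ j, f z j := by
    intro z
    have h1 : ‖f z‖ ≤ R := by simpa using hR (mem_range_self z)
    have h2 : |f z ⟨0, hκ⟩| ≤ ‖f z‖ := by
      rw [EuclideanSpace.norm_eq, ← Real.sqrt_sq_eq_abs]
      apply Real.sqrt_le_sqrt
      calc (f z ⟨0, hκ⟩)^2 = ‖f z ⟨0, hκ⟩‖^2 := by rw [Real.norm_eq_abs, sq_abs]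
        _ ≤ ∑ i, ‖f z i‖^2 := Finset.single_le_sum (f := fun i => ‖f z i‖^2) (fun i _ => sq_nonneg _) (Finset.mem_univ _)
    have h3 : f z ⟨0, hκ⟩ ≤ ⨆ j, f z j :=
      le_ciSup (Set.Finite.bddAbove (Set.finite_range _)) _
    have := abs_le.mp h2
    linarith
  have hbdd : ∀ t : ℝ, 0 < t → BddBelow (Set.range fun z : Y => hlF Y π f t y z) := by
    intro t ht
    refine ⟨-R, ?_⟩
    rintro _ ⟨z, rfl⟩
    have h0 : 0 ≤ (Metric.infDist (f z) (π ⁻¹' {y}))^2 / (2*t) := by positivity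
    have := hA z
    simp only [hlF]
    linarith
  have hBC : ∀ z, Bz z ≤ 2*C*τ₁^3 := by
    intro z
    have : 2*C*τ₁^3 = D^2 := by
      rw [hCdef]; field_simp
    rw [this]; exact hBzD z
  refine ⟨convex_Ioo τ₁ τ₂, ?_⟩
  intro t₁ ht₁ t₂ ht₂ a b ha hb hab
  simp only [smul_eq_mul]
  have hs : a * t₁ + b * t₂ ∈ Set.Ioo τ₁ τ₂ := by
    have := (convex_Ioo τ₁ τ₂) ht₁ ht₂ ha hb hab
    simpa using this
  set s : ℝ := a * t₁ + b * t₂ with hsdef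
  have hs0 : 0 < s := hτ₁.trans hs.1
  have ht₁0 : 0 < t₁ := hτ₁.trans ht₁.1
  have ht₂0 : 0 < t₂ := hτ₁.trans ht₂.1
  rw [show iQ Y π f s y - C * s^2 = iQ Y π f s y - C * s^2 from rfl]
  have key : a * (iQ Y π f t₁ y - C * t₁^2) + b * (iQ Y π f t₂ y - C * t₂^2) + C * s^2
      ≤ iQ Y π f s y := by
    have goal : a * (iQ Y π f t₁ y - C * t₁^2) + b * (iQ Y π f t₂ y - C * t₂^2) + C * s^2
        ≤ ⨅ z : Y, hlF Y π f s y z := by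
      apply le_ciInf
      intro z
      have hconc := (aux_convex τ₁ τ₂ (Bz z) C hτ₁ (hBz0 z) (hBC z)).2 ht₁ ht₂ ha hb hab
      simp only [smul_eq_mul] at hconc
      have h1 : iQ Y π f t₁ y ≤ hlF Y π f t₁ y z := ciInf_le (hbdd t₁ ht₁0) z
      have h2 : iQ Y π f t₂ y ≤ hlF Y π f t₂ y z := ciInf_le (hbdd t₂ ht₂0) z
      have e₁ : a * iQ Y π f t₁ y ≤ a * hlF Y π f t₁ y z :=
        mul_le_mul_of_nonneg_left h1 ha
      have e₂ : b * iQ Y π f t₂ y ≤ b * hlF Y π f t₂ y z :=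
        mul_le_mul_of_nonneg_left h2 hb
      have hF : ∀ t : ℝ, hlF Y π f t y z = (⨆ j, f z j) + Bz z / (2*t) := fun t => rfl
      rw [hF t₁] at e₁
      rw [hF t₂] at e₂
      rw [hF s]
      have hS : a*(⨆ j, f z j) + b*(⨆ j, f z j) = ⨆ j, f z j := by
        rw [← add_mul, hab, one_mul]
      linarith [hconc, e₁, e₂, hS]
    exact goal
  linarith
end

section
/- For every bounded continuous section f of π, every y ∈ Y and all 0 < t < s, one has (iD⁺f(y, t))² · (s − t)/(2st) ≤ iQ_t f(y) − iQ_s f(y) ≤ (iD⁻f(y, s))² · (s − t)/(2st). -/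
open Metric Set Filter Topology MeasureTheory

lemma coord_abs_le_norm {κ : ℕ} (x : EuclideanSpace ℝ (Fin κ)) (j : Fin κ) : |x j| ≤ ‖x‖ := by
  rw [EuclideanSpace.norm_eq]
  have h1 : |x j| = Real.sqrt (‖x j‖ ^ 2) := by
    rw [Real.sqrt_sq_eq_abs, Real.norm_eq_abs, abs_abs]
  rw [h1]
  exact Real.sqrt_le_sqrt (Finset.single_le_sum (f := fun i => ‖x i‖ ^ 2)
    (fun i _ => sq_nonneg _) (Finset.mem_univ j))

theorem stmt_14 (κ : ℕ) (hκ : 1 ≤ κ)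
    (Y : Set (EuclideanSpace ℝ (Fin κ))) (hY : Y.Nonempty) (hYb : Bornology.IsBounded Y)
    (π : EuclideanSpace ℝ (Fin κ) → Y) (hπc : Continuous π) (hπo : IsOpenMap π)
    (hπs : Function.Surjective π)
    (f : Y → EuclideanSpace ℝ (Fin κ)) (hfc : Continuous f)
    (hfb : Bornology.IsBounded (Set.range f)) (hsec : ∀ y : Y, π (f y) = y)

    (y : Y) (t s : ℝ) (ht : 0 < t) (hts : t < s) :
    (iDp Y π f y t)^2 * (s - t) / (2*s*t) ≤ iQ Y π f t y - iQ Y π f s y ∧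
      iQ Y π f t y - iQ Y π f s y ≤ (iDm Y π f y s)^2 * (s - t) / (2*s*t) := by
  haveI : Nonempty Y := hY.to_subtype
  haveI : Nonempty (Fin κ) := ⟨⟨0, hκ⟩⟩
  have hs : 0 < s := ht.trans hts
  -- bound on f
  obtain ⟨R, hRsub⟩ := hfb.subset_closedBall 0
  have hR : ∀ z : Y, ‖f z‖ ≤ R := fun z => by
    have := hRsub (Set.mem_range_self z)
    rwa [Metric.mem_closedBall, dist_zero_right] at this
  -- distance function and its bounds
  have hg0 : ∀ z : Y, 0 ≤ Metric.infDist (f z) (π ⁻¹' {y}) := fun z => Metric.infDist_nonneg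
  have hfy : f y ∈ π ⁻¹' {y} := by simp [Set.mem_preimage, hsec y]
  have hgC : ∀ z : Y, Metric.infDist (f z) (π ⁻¹' {y}) ≤ R + R := fun z => by
    refine (Metric.infDist_le_dist_of_mem hfy).trans ?_
    rw [dist_eq_norm]
    exact (norm_sub_le _ _).trans (add_le_add (hR z) (hR y))
  -- bounds on the sup term
  have hMlb : ∀ z : Y, -R ≤ ⨆ j, f z j := by
    intro z
    refine le_trans (neg_le_of_abs_le ((coord_abs_le_norm (f z) ⟨0, hκ⟩).trans (hR z)))
      (le_ciSup (Set.Finite.bddAbove (Set.finite_range _)) (⟨0, hκ⟩ : Fin κ))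
  -- lower bound for hlF
  have hFlb : ∀ r : ℝ, 0 < r → ∀ z : Y, -R ≤ hlF Y π f r y z := by
    intro r hr z
    have h1 : 0 ≤ (Metric.infDist (f z) (π ⁻¹' {y}))^2 / (2*r) :=
      div_nonneg (sq_nonneg _) (by linarith)
    have := hMlb z
    unfold hlF
    linarith
  have hbdd : ∀ r : ℝ, 0 < r → BddBelow (Set.range fun z : Y => hlF Y π f r y z) := by
    intro r hr
    exact ⟨-R, by rintro _ ⟨z, rfl⟩; exact hFlb r hr z⟩
  have hle_iQ : ∀ r : ℝ, 0 < r → ∀ z : Y, iQ Y π f r y ≤ hlF Y π f r y z := fun r hr z =>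
    ciInf_le (hbdd r hr) z
  -- existence of minimizing sequences
  have hexists : ∀ r : ℝ, 0 < r → ∃ u : ℕ → Y, IsMinSeq Y π f r y u := by
    intro r hr
    obtain ⟨v, -, hv, hvmem⟩ := exists_seq_tendsto_sInf (Set.range_nonempty
      (fun z : Y => hlF Y π f r y z)) (hbdd r hr)
    choose w hw using hvmem
    refine ⟨w, ?_⟩
    unfold IsMinSeq iQ
    rw [← sInf_range]
    have : (fun n => hlF Y π f r y (w n)) = v := funext hw
    rw [this]
    exact hv
  -- key identity
  set c : ℝ := (s - t) / (2*s*t) with hcdef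
  have hc : 0 < c := div_pos (by linarith) (by positivity)
  have hkey : ∀ z : Y, hlF Y π f t y z =
      hlF Y π f s y z + (Metric.infDist (f z) (π ⁻¹' {y}))^2 * c := by
    intro z
    unfold hlF
    rw [hcdef]
    field_simp
    ring
  -- monotonicity in time
  have hq : 0 ≤ iQ Y π f t y - iQ Y π f s y := by
    have : iQ Y π f s y ≤ iQ Y π f t y := by
      refine ciInf_mono (hbdd s hs) fun z => ?_
      have := hkey z
      nlinarith [sq_nonneg (Metric.infDist (f z) (π ⁻¹' {y})), hc]
    linarith
  -- the monotone auxiliary function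
  set f2 : ℝ → ℝ := fun x => (max x 0)^2 * c with hf2def
  have hf2mono : Monotone f2 := fun a b hab =>
    mul_le_mul_of_nonneg_right
      (pow_le_pow_left₀ (le_max_right a 0) (max_le_max hab le_rfl) 2) hc.le
  have hf2cont : Continuous f2 :=
    (((continuous_id.max continuous_const).pow 2).mul continuous_const)
  -- key estimate for minimizing sequences at time t (limsup version)
  have hPt : ∀ u : ℕ → Y, IsMinSeq Y π f t y u →
      0 ≤ Filter.limsup (fun n => Metric.infDist (f (u n)) (π ⁻¹' {y})) Filter.atTop ∧
      (Filter.limsup (fun n => Metric.infDist (f (u n)) (π ⁻¹' {y})) Filter.atTop)^2 * c ≤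
        iQ Y π f t y - iQ Y π f s y := by
    intro u hu
    set a : ℕ → ℝ := fun n => Metric.infDist (f (u n)) (π ⁻¹' {y}) with hadef
    have hab_le : Filter.IsBoundedUnder (· ≤ ·) Filter.atTop a :=
      isBoundedUnder_of ⟨R + R, fun n => hgC (u n)⟩
    have hab_ge : Filter.IsBoundedUnder (· ≥ ·) Filter.atTop a :=
      isBoundedUnder_of ⟨0, fun n => hg0 (u n)⟩
    have hcob : Filter.IsCoboundedUnder (· ≤ ·) Filter.atTop a := hab_ge.isCoboundedUnder_le
    have hL0 : 0 ≤ Filter.limsup a Filter.atTop :=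
      le_limsup_of_frequently_le (Filter.Frequently.of_forall fun n => hg0 (u n)) hab_le
    refine ⟨hL0, ?_⟩
    have hmap : f2 (Filter.limsup a Filter.atTop) = Filter.limsup (f2 ∘ a) Filter.atTop :=
      hf2mono.map_limsup_of_continuousAt a hf2cont.continuousAt hab_le hcob
    have hfa : f2 ∘ a = fun n => a n ^ 2 * c := by
      funext n
      simp [hf2def, max_eq_left (show 0 ≤ a n from hg0 (u n))]
    have hL2 : f2 (Filter.limsup a Filter.atTop) = (Filter.limsup a Filter.atTop)^2 * c := by
      simp [hf2def, max_eq_left hL0]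
    have hpt : ∀ n, a n ^ 2 * c ≤ hlF Y π f t y (u n) - iQ Y π f s y := by
      intro n
      have h1 := hkey (u n)
      have h2 := hle_iQ s hs (u n)
      simp only [hadef]
      linarith
    have hlim : Filter.Tendsto (fun n => hlF Y π f t y (u n) - iQ Y π f s y) Filter.atTop
        (nhds (iQ Y π f t y - iQ Y π f s y)) := hu.sub_const _
    calc (Filter.limsup a Filter.atTop)^2 * c
        = Filter.limsup (fun n => a n ^ 2 * c) Filter.atTop := by rw [← hL2, hmap, hfa]
      _ ≤ Filter.limsup (fun n => hlF Y π f t y (u n) - iQ Y π f s y) Filter.atTop :=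
          limsup_le_limsup (Filter.Eventually.of_forall hpt)
            (isCoboundedUnder_le_of_le Filter.atTop
              (fun n => mul_nonneg (sq_nonneg _) hc.le))
            hlim.isBoundedUnder_le
      _ = iQ Y π f t y - iQ Y π f s y := hlim.limsup_eq
  -- key estimate for minimizing sequences at time s (liminf version)
  have hPs : ∀ u : ℕ → Y, IsMinSeq Y π f s y u →
      0 ≤ Filter.liminf (fun n => Metric.infDist (f (u n)) (π ⁻¹' {y})) Filter.atTop ∧
      iQ Y π f t y - iQ Y π f s y ≤
        (Filter.liminf (fun n => Metric.infDist (f (u n)) (π ⁻¹' {y})) Filter.atTop)^2 * c := by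
    intro u hu
    set a : ℕ → ℝ := fun n => Metric.infDist (f (u n)) (π ⁻¹' {y}) with hadef
    have hab_le : Filter.IsBoundedUnder (· ≤ ·) Filter.atTop a :=
      isBoundedUnder_of ⟨R + R, fun n => hgC (u n)⟩
    have hab_ge : Filter.IsBoundedUnder (· ≥ ·) Filter.atTop a :=
      isBoundedUnder_of ⟨0, fun n => hg0 (u n)⟩
    have hcob : Filter.IsCoboundedUnder (· ≥ ·) Filter.atTop a := hab_le.isCoboundedUnder_ge
    have hL0 : 0 ≤ Filter.liminf a Filter.atTop :=
      le_liminf_of_le hcob (Filter.Eventually.of_forall fun n => hg0 (u n))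
    refine ⟨hL0, ?_⟩
    have hmap : f2 (Filter.liminf a Filter.atTop) = Filter.liminf (f2 ∘ a) Filter.atTop :=
      hf2mono.map_liminf_of_continuousAt a hf2cont.continuousAt hcob hab_ge
    have hfa : f2 ∘ a = fun n => a n ^ 2 * c := by
      funext n
      simp [hf2def, max_eq_left (show 0 ≤ a n from hg0 (u n))]
    have hL2 : f2 (Filter.liminf a Filter.atTop) = (Filter.liminf a Filter.atTop)^2 * c := by
      simp [hf2def, max_eq_left hL0]
    have hpt : ∀ n, iQ Y π f t y - hlF Y π f s y (u n) ≤ a n ^ 2 * c := by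
      intro n
      have h1 := hkey (u n)
      have h2 := hle_iQ t ht (u n)
      simp only [hadef]
      linarith
    have hlim : Filter.Tendsto (fun n => iQ Y π f t y - hlF Y π f s y (u n)) Filter.atTop
        (nhds (iQ Y π f t y - iQ Y π f s y)) := Filter.Tendsto.const_sub _ hu
    calc iQ Y π f t y - iQ Y π f s y
        = Filter.liminf (fun n => iQ Y π f t y - hlF Y π f s y (u n)) Filter.atTop :=
          hlim.liminf_eq.symm
      _ ≤ Filter.liminf (fun n => a n ^ 2 * c) Filter.atTop :=
          liminf_le_liminf (Filter.Eventually.of_forall hpt)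
            hlim.isBoundedUnder_ge
            ((isBoundedUnder_of ⟨(R+R)^2*c, fun n =>
              mul_le_mul_of_nonneg_right
                (pow_le_pow_left₀ (hg0 (u n)) (hgC (u n)) 2) hc.le⟩ :
              Filter.IsBoundedUnder (· ≤ ·) Filter.atTop _).isCoboundedUnder_ge)
      _ = (Filter.liminf a Filter.atTop)^2 * c := by rw [← hL2, hmap, hfa]
  -- assemble
  set q : ℝ := iQ Y π f t y - iQ Y π f s y with hqdef
  have hqc : 0 ≤ q / c := div_nonneg hq hc.le
  constructor
  · -- lower bound
    obtain ⟨u0, hu0⟩ := hexists t ht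
    have hAne : { a : ℝ | ∃ u : ℕ → Y, IsMinSeq Y π f t y u ∧
        a = Filter.limsup (fun n => Metric.infDist (f (u n)) (π ⁻¹' {y})) Filter.atTop }.Nonempty :=
      ⟨_, u0, hu0, rfl⟩
    have hAle : ∀ a ∈ { a : ℝ | ∃ u : ℕ → Y, IsMinSeq Y π f t y u ∧
        a = Filter.limsup (fun n => Metric.infDist (f (u n)) (π ⁻¹' {y})) Filter.atTop },
        a ≤ Real.sqrt (q / c) := by
      rintro a ⟨u, hu, rfl⟩
      obtain ⟨h0, h2⟩ := hPt u hu
      rw [Real.le_sqrt h0 hqc]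
      rw [le_div_iff₀ hc]
      exact h2
    have hsup_le : iDp Y π f y t ≤ Real.sqrt (q / c) := csSup_le hAne hAle
    have hsup0 : 0 ≤ iDp Y π f y t := by
      refine le_trans (hPt u0 hu0).1 (le_csSup ⟨Real.sqrt (q / c), hAle⟩ ⟨u0, hu0, rfl⟩)
    have hsq : (iDp Y π f y t)^2 ≤ q / c := by
      calc (iDp Y π f y t)^2 ≤ (Real.sqrt (q / c))^2 := pow_le_pow_left₀ hsup0 hsup_le 2
        _ = q / c := Real.sq_sqrt hqc
    have : (iDp Y π f y t)^2 * c ≤ q := by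
      rw [← le_div_iff₀ hc] at *
      exact hsq
    calc (iDp Y π f y t)^2 * (s - t) / (2*s*t) = (iDp Y π f y t)^2 * c := by
          rw [hcdef, mul_div_assoc]
      _ ≤ q := this
  · -- upper bound
    obtain ⟨u0, hu0⟩ := hexists s hs
    have hBne : { a : ℝ | ∃ u : ℕ → Y, IsMinSeq Y π f s y u ∧
        a = Filter.liminf (fun n => Metric.infDist (f (u n)) (π ⁻¹' {y})) Filter.atTop }.Nonempty :=
      ⟨_, u0, hu0, rfl⟩
    have hBge : ∀ a ∈ { a : ℝ | ∃ u : ℕ → Y, IsMinSeq Y π f s y u ∧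
        a = Filter.liminf (fun n => Metric.infDist (f (u n)) (π ⁻¹' {y})) Filter.atTop },
        Real.sqrt (q / c) ≤ a := by
      rintro a ⟨u, hu, rfl⟩
      obtain ⟨h0, h2⟩ := hPs u hu
      have hqa : q / c ≤ _^2 := (div_le_iff₀ hc).mpr h2
      calc Real.sqrt (q / c) ≤ Real.sqrt (_^2) := Real.sqrt_le_sqrt hqa
        _ = _ := Real.sqrt_sq h0
    have hinf_ge : Real.sqrt (q / c) ≤ iDm Y π f y s := le_csInf hBne hBge
    have hsq : q / c ≤ (iDm Y π f y s)^2 := by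
      calc q / c = (Real.sqrt (q / c))^2 := (Real.sq_sqrt hqc).symm
        _ ≤ (iDm Y π f y s)^2 := pow_le_pow_left₀ (Real.sqrt_nonneg _) hinf_ge 2
    have : q ≤ (iDm Y π f y s)^2 * c := by
      rw [div_le_iff₀ hc] at hsq
      exact hsq
    calc q ≤ (iDm Y π f y s)^2 * c := this
      _ = (iDm Y π f y s)^2 * (s - t) / (2*s*t) := by rw [hcdef, mul_div_assoc]
end

section
/- Let f be a bounded continuous section of π, let y ∈ Y, let (t_n) ⊂ (0, ∞) with t_n → 0, and let (y_n) be a sequence in Y such that max_{j=1,…,κ} f_j(y_n) + d(f(y_n), π⁻¹(y))²/(2t_n) ≤ iQ_{t_n} f(y) + 1/n for all n ≥ 1. Then d(f(y_n), π⁻¹(y)) → 0, y_n → y, and f(y_n) → f(y). -/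
open Metric Set Filter Topology MeasureTheory

theorem stmt_19 (κ : ℕ) (hκ : 1 ≤ κ)
    (Y : Set (EuclideanSpace ℝ (Fin κ))) (hY : Y.Nonempty) (hYb : Bornology.IsBounded Y)
    (π : EuclideanSpace ℝ (Fin κ) → Y) (hπc : Continuous π) (hπo : IsOpenMap π)
    (hπs : Function.Surjective π)
    (f : Y → EuclideanSpace ℝ (Fin κ)) (hfc : Continuous f)
    (hfb : Bornology.IsBounded (Set.range f)) (hsec : ∀ y : Y, π (f y) = y)

    (y : Y) (ts : ℕ → ℝ) (hts : ∀ n, 0 < ts n)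
    (hts0 : Filter.Tendsto ts Filter.atTop (nhds (0:ℝ)))
    (u : ℕ → Y)
    (hu : ∀ n : ℕ, 1 ≤ n →
      (⨆ j, f (u n) j) + (Metric.infDist (f (u n)) (π ⁻¹' {y}))^2 / (2 * ts n) ≤
        iQ Y π f (ts n) y + 1 / (n : ℝ)) :
    Filter.Tendsto (fun n => Metric.infDist (f (u n)) (π ⁻¹' {y}))
        Filter.atTop (nhds 0) ∧
      Filter.Tendsto u Filter.atTop (nhds y) ∧
      Filter.Tendsto (fun n => f (u n)) Filter.atTop (nhds (f y)) := by
  haveI : Nonempty (Fin κ) := ⟨⟨0, hκ⟩⟩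
  haveI : Nonempty Y := hY.to_subtype
  set S := π ⁻¹' {y} with hS
  have hfyS : f y ∈ S := by simp [hS, hsec y]
  have hSne : S.Nonempty := ⟨f y, hfyS⟩
  obtain ⟨M, hM⟩ := isBounded_iff_forall_norm_le.mp hfb
  set M' : ℝ := max M 0 with hM'def
  have hM'0 : 0 ≤ M' := le_max_right _ _
  have hM' : ∀ z : Y, ‖f z‖ ≤ M' := fun z =>
    (hM (f z) ⟨z, rfl⟩).trans (le_max_left _ _)
  have hcoord : ∀ (z : Y) (j : Fin κ), |f z j| ≤ M' := fun z j =>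
    (coord_abs_le_norm (f z) j).trans (hM' z)
  have hsup_le : ∀ z : Y, (⨆ j, f z j) ≤ M' := fun z =>
    ciSup_le fun j => (le_abs_self _).trans (hcoord z j)
  have hsup_ge : ∀ z : Y, -M' ≤ ⨆ j, f z j := by
    intro z
    have hb : BddAbove (Set.range fun j => f z j) := (Set.finite_range _).bddAbove
    refine le_trans ?_ (le_ciSup hb (Classical.arbitrary (Fin κ)))
    have h1 := hcoord z (Classical.arbitrary (Fin κ))
    have h2 := neg_abs_le (f z (Classical.arbitrary (Fin κ)))
    linarith
  -- bound on iQ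
  have hiQ_le : ∀ t : ℝ, 0 < t → iQ Y π f t y ≤ M' := by
    intro t ht
    have h1 : iQ Y π f t y ≤ hlF Y π f t y y := by
      apply ciInf_le
      refine ⟨-M', ?_⟩
      rintro a ⟨z, rfl⟩
      have h3 : 0 ≤ (Metric.infDist (f z) (π ⁻¹' {y}))^2 / (2*t) := by positivity
      have h4 := hsup_ge z
      simp only [hlF]
      linarith
    have h2 : hlF Y π f t y y = ⨆ j, f y j := by
      simp [hlF, Metric.infDist_zero_of_mem hfyS]
      exact Or.inl (Metric.infDist_zero_of_mem hfyS)
    rw [h2] at h1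
    exact h1.trans (hsup_le y)
  set d : ℕ → ℝ := fun n => Metric.infDist (f (u n)) S with hd
  have hd0 : ∀ n, 0 ≤ d n := fun n => Metric.infDist_nonneg
  have hdsq : ∀ n, 1 ≤ n → (d n)^2 ≤ 2 * ts n * (2*M' + 1) := by
    intro n hn
    have h := hu n hn
    have hnpos : (0:ℝ) < n := by exact_mod_cast hn
    have h1n : 1 / (n:ℝ) ≤ 1 := by
      rw [div_le_one hnpos]; exact_mod_cast hn
    have hiq := hiQ_le (ts n) (hts n)
    have hge := hsup_ge (u n)
    have h2 : (d n)^2 / (2 * ts n) ≤ 2*M' + 1 := by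
      simp only [hd]
      linarith
    have hpos : 0 < 2 * ts n := by linarith [hts n]
    calc (d n)^2 = (d n)^2 / (2 * ts n) * (2 * ts n) := by rw [div_mul_cancel₀ _ hpos.ne']
      _ ≤ (2*M'+1) * (2*ts n) := by nlinarith
      _ = 2 * ts n * (2*M'+1) := by ring
  have hdlim : Tendsto d atTop (nhds 0) := by
    have hg0 : Tendsto (fun n => 2 * ts n * (2*M'+1)) atTop (nhds 0) := by
      have := (hts0.const_mul 2).mul_const (2*M'+1)
      simpa using this
    have hg : Tendsto (fun n => Real.sqrt (2 * ts n * (2*M'+1))) atTop (nhds 0) := by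
      have := (Real.continuous_sqrt.tendsto 0).comp hg0
      simpa [Function.comp_def] using this
    apply squeeze_zero' (Eventually.of_forall hd0) ?_ hg
    filter_upwards [eventually_ge_atTop 1] with n hn
    calc d n = Real.sqrt ((d n)^2) := (Real.sqrt_sq (hd0 n)).symm
      _ ≤ _ := Real.sqrt_le_sqrt (hdsq n hn)
  -- choose approximate nearest points
  have hx : ∀ n : ℕ, ∃ x ∈ S, dist (f (u n)) x < d n + 1/((n:ℝ)+1) := by
    intro n
    refine (Metric.infDist_lt_iff hSne).mp ?_
    have : (0:ℝ) < 1/((n:ℝ)+1) := by positivity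
    simpa only [hd] using lt_add_of_pos_right (d n) this
  choose x hxS hxd using hx
  have hdist0 : Tendsto (fun n => dist (f (u n)) (x n)) atTop (nhds 0) := by
    apply squeeze_zero (fun n => dist_nonneg) (fun n => (hxd n).le)
    have h1 : Tendsto (fun n : ℕ => 1/((n:ℝ)+1)) atTop (nhds 0) :=
      tendsto_one_div_add_atTop_nhds_zero_nat
    simpa using hdlim.add h1
  -- boundedness of the chosen points
  have hdb : ∀ n, d n ≤ 2*M' := by
    intro n
    have h1 : d n ≤ dist (f (u n)) (f y) := Metric.infDist_le_dist_of_mem hfyS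
    have h2 : dist (f (u n)) (f y) ≤ ‖f (u n)‖ + ‖f y‖ := dist_le_norm_add_norm _ _
    have := hM' (u n); have := hM' y
    linarith
  have hxb : ∀ n, ‖x n‖ ≤ 3*M' + 2 := by
    intro n
    have h1 := (hxd n).le
    have h2 : (1:ℝ)/((n:ℝ)+1) ≤ 1 := by
      rw [div_le_one (by positivity)]
      have : (0:ℝ) ≤ (n:ℝ) := Nat.cast_nonneg n
      linarith
    have h3 : dist (x n) (0 : EuclideanSpace ℝ (Fin κ)) ≤
        dist (x n) (f (u n)) + dist (f (u n)) 0 := dist_triangle _ _ _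
    rw [dist_zero_right, dist_zero_right, dist_comm] at h3
    have := hM' (u n); have := hdb n
    linarith
  have hfinK : ∀ n, f (u n) ∈ Metric.closedBall (0 : EuclideanSpace ℝ (Fin κ)) (3*M'+2) := by
    intro n
    rw [mem_closedBall_zero_iff]
    have := hM' (u n); linarith
  have hxinK : ∀ n, x n ∈ Metric.closedBall (0 : EuclideanSpace ℝ (Fin κ)) (3*M'+2) :=
    fun n => mem_closedBall_zero_iff.mpr (hxb n)
  have hK : IsCompact (Metric.closedBall (0 : EuclideanSpace ℝ (Fin κ)) (3*M'+2)) :=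
    isCompact_closedBall _ _
  have hπu : UniformContinuousOn π (Metric.closedBall (0 : EuclideanSpace ℝ (Fin κ)) (3*M'+2)) :=
    hK.uniformContinuousOn_of_continuous hπc.continuousOn
  have huy : Tendsto u atTop (nhds y) := by
    rw [Metric.tendsto_atTop]
    intro ε hε
    obtain ⟨δ, hδ, hδ'⟩ := Metric.uniformContinuousOn_iff.mp hπu ε hε
    obtain ⟨N, hN⟩ := Metric.tendsto_atTop.mp hdist0 δ hδ
    refine ⟨N, fun n hn => ?_⟩
    have h1 : dist (f (u n)) (x n) < δ := by
      have := hN n hn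
      rwa [Real.dist_eq, sub_zero, abs_of_nonneg dist_nonneg] at this
    have h2 := hδ' _ (hfinK n) _ (hxinK n) h1
    have hπx : π (x n) = y := hxS n
    rwa [hsec (u n), hπx] at h2
  exact ⟨hdlim, huy, ((hfc.tendsto y).comp huy : _)⟩
end
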